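/- arXiv:2409.12736 — 6 statements merged into one kernel-verified Lean document; each statement's English description precedes it below -/
import Mathlib

section
/- Suppose (λ, φ, ζ) satisfies the master stability equation with ζ a nonzero T-periodic C¹ function, where φ = 2πl/N for some l ∈ {1,…,N}. Define z = (z_1,…,z_N) by z_n(t) = ζ(t−nτ)·e^{λt + inφ}. Then z is well defined with respect to indices modulo N (the defining formula satisfies z_{n+N}(t) = z_n(t)), z is nonzero, z satisfies z_n'(t) = Σ_{|m|≤r} A_m(t−nτ) z_{n+m}(t) for all n and all t (indices mod N), and z(t+T) = e^{λT} z(t) for all t; that is, μ = e^{λT} is a Floquet multiplier of the DTW with bundle z. -/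
noncomputable section

/-- The tuple of wave arguments `(y(t+rτ), …, y(t), …, y(t−rτ))`:
slot `j : Fin (2r+1)` corresponds to the coupling offset `m = j − r`
and carries the value `y(t − mτ)`. -/
def waveArgs (d r : ℕ) (y : ℝ → Fin d → ℝ) (τ t : ℝ) : Fin (2 * r + 1) → Fin d → ℝ :=
  fun j => y (t - (((j : ℕ) : ℝ) - (r : ℝ)) * τ)

/-- The real Jacobian matrix of `G` with respect to its `j`-th `d`-dimensional
block argument, evaluated along the traveling wave profile: this is `A_{j−r}(t)`. -/
def AmatR (d r : ℕ) (G : (Fin (2 * r + 1) → Fin d → ℝ) → Fin d → ℝ)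
    (y : ℝ → Fin d → ℝ) (τ : ℝ) (t : ℝ) (j : Fin (2 * r + 1)) :
    Matrix (Fin d) (Fin d) ℝ :=
  Matrix.of fun i k => fderiv ℝ G (waveArgs d r y τ t) (Pi.single j (Pi.single k 1)) i

/-- The complexified Jacobian matrices `A_{j−r}(t)`. -/
def Amat (d r : ℕ) (G : (Fin (2 * r + 1) → Fin d → ℝ) → Fin d → ℝ)
    (y : ℝ → Fin d → ℝ) (τ : ℝ) (t : ℝ) (j : Fin (2 * r + 1)) :
    Matrix (Fin d) (Fin d) ℂ :=
  (AmatR d r G y τ t j).map (fun a => (a : ℂ))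

/-- The profile equation `y'(t) = G(y(t+rτ), …, y(t), …, y(t−rτ))`. -/
def SatProfile (d r : ℕ) (G : (Fin (2 * r + 1) → Fin d → ℝ) → Fin d → ℝ)
    (y : ℝ → Fin d → ℝ) (τ : ℝ) : Prop :=
  ∀ t : ℝ, HasDerivAt y (G (waveArgs d r y τ t)) t

/-- The coupling offset `m = j − r` as a real number. -/
def mShift (r : ℕ) (j : Fin (2 * r + 1)) : ℝ := ((j : ℕ) : ℝ) - (r : ℝ)

/-- The coupling offset `m = j − r` as an element of `ZMod N` (node index shift). -/
def nodeOff (N r : ℕ) (j : Fin (2 * r + 1)) : ZMod N :=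
  ((((j : ℕ) : ℤ) - (r : ℤ) : ℤ) : ZMod N)

/-- The master stability equation for the triple `(λ, φ, ζ)`:
`ζ'(t) = −λ ζ(t) + ∑_{|m| ≤ r} e^{imφ} A_m(t) ζ(t − mτ)`. -/
def SatMSE (d r : ℕ) (A : ℝ → Fin (2 * r + 1) → Matrix (Fin d) (Fin d) ℂ) (τ : ℝ)
    (lam : ℂ) (φ : ℝ) (ζ : ℝ → Fin d → ℂ) : Prop :=
  ∀ t : ℝ, HasDerivAt ζ
    (-lam • ζ t + ∑ j : Fin (2 * r + 1),
      Complex.exp (Complex.I * ((mShift r j * φ : ℝ) : ℂ)) •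
        (A t j).mulVec (ζ (t - mShift r j * τ))) t

/-- The Floquet problem for a discrete traveling wave on `N` nodes:
`z_n'(t) = ∑_{|m| ≤ r} A_m(t − nτ) z_{n+m}(t)` (indices mod `N`) and
`z(t+T) = μ z(t)`; i.e. `μ` is a Floquet multiplier with bundle `z`. -/
def SatFloquet (N d r : ℕ) (A : ℝ → Fin (2 * r + 1) → Matrix (Fin d) (Fin d) ℂ)
    (τ T : ℝ) (μ : ℂ) (z : ZMod N → ℝ → Fin d → ℂ) : Prop :=
  (∀ (n : ZMod N) (t : ℝ), HasDerivAt (z n)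
      (∑ j : Fin (2 * r + 1),
        (A (t - ((n.val : ℕ) : ℝ) * τ) j).mulVec (z (n + nodeOff N r j) t)) t) ∧
    ∀ (n : ZMod N) (t : ℝ), z n (t + T) = μ • z n t

/-- The plane-wave bundle component `ζ(t − ντ) e^{λt + iνφ}`. -/
def pwave (d : ℕ) (lam : ℂ) (φ τ : ℝ) (ζ : ℝ → Fin d → ℂ) (ν : ℕ) (t : ℝ) : Fin d → ℂ :=
  fun k => Complex.exp (lam * (t : ℂ) + Complex.I * (((ν : ℝ) * φ : ℝ) : ℂ)) *
    ζ (t - (ν : ℝ) * τ) k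

/-- `Ξ` is the fundamental matrix solution of the linear Floquet ODE:
`Ξ(0) = Id` and every `t ↦ Ξ(t)v` solves `z' = K(t)z`. -/
def IsFundamental (N d r : ℕ) [NeZero N]
    (A : ℝ → Fin (2 * r + 1) → Matrix (Fin d) (Fin d) ℂ) (τ : ℝ)
    (Ξ : ℝ → Matrix (ZMod N × Fin d) (ZMod N × Fin d) ℂ) : Prop :=
  Ξ 0 = 1 ∧ ∀ (v : ZMod N × Fin d → ℂ) (t : ℝ),
    HasDerivAt (fun s => (Ξ s).mulVec v)
      (fun p => (∑ j : Fin (2 * r + 1),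
        (A (t - ((p.1.val : ℕ) : ℝ) * τ) j).mulVec
          (fun k => (Ξ t).mulVec v (p.1 + nodeOff N r j, k))) p.2) t

/-- `μ` is a simple eigenvalue of the matrix `M`. -/
def IsSimpleEigenvalue {n : Type*} [Fintype n] [DecidableEq n]
    (M : Matrix n n ℂ) (μ : ℂ) : Prop :=
  Polynomial.rootMultiplicity μ (Matrix.charpoly M) = 1

/-- The matrix `V(φ) = (1/√N)(e^{iφ}, e^{2iφ}, …, e^{i(N−1)φ}, 1)ᵀ ⊗ Id_d`. -/
def Vmat (N d : ℕ) (φ : ℝ) : Matrix (ZMod N × Fin d) (Fin d) ℂ :=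
  Matrix.of fun p k =>
    if p.2 = k then
      Complex.exp (Complex.I * ((((p.1.val : ℕ) : ℝ) * φ : ℝ) : ℂ)) / ((Real.sqrt N : ℝ) : ℂ)
    else 0

/-- The reduced monodromy matrix `R(φ) = V(φ)ᴴ Ξ(τ) V(φ)`. -/
def Rmat (N d : ℕ) [NeZero N] (Ξτ : Matrix (ZMod N × Fin d) (ZMod N × Fin d) ℂ)
    (φ : ℝ) : Matrix (Fin d) (Fin d) ℂ :=
  (Vmat N d φ).conjTranspose * Ξτ * Vmat N d φ

/-- The circulant companion matrix `C`: `(Cv)_n = v_{n−1}` (indices mod `N`). -/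
def Cmat (N : ℕ) : Matrix (ZMod N) (ZMod N) ℂ :=
  Matrix.of fun a b => if b = a - 1 then 1 else 0


/-- The ℤ-indexed plane-wave bundle `z_n(t) = ζ(t − nτ) e^{λt + inφ}`. -/
def bundleZ (d : ℕ) (lam : ℂ) (φ τ : ℝ) (ζ : ℝ → Fin d → ℂ) (n : ℤ) (t : ℝ) : Fin d → ℂ :=
  fun k => Complex.exp (lam * (t : ℂ) + Complex.I * (((n : ℝ) * φ : ℝ) : ℂ)) *
    ζ (t - (n : ℝ) * τ) k

/-- If `(λ, φ, ζ)` satisfies the master stability equation with `ζ` a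
nonzero `T`-periodic `C¹` function and `φ = 2πl/N`, `l ∈ {1,…,N}`, then
`z_n(t) = ζ(t−nτ)e^{λt+inφ}` is well defined modulo `N`, nonzero, satisfies the
linearized network equations, and `z(t+T) = e^{λT} z(t)`: `μ = e^{λT}` is a Floquet
multiplier of the DTW with bundle `z`. -/
theorem mse_gives_floquet_bundle
    (N d r M l : ℕ) (hN : 2 ≤ N) (hd : 1 ≤ d) (hr : 1 ≤ r) (hM : 0 < M)
    (hl1 : 1 ≤ l) (hlN : l ≤ N)
    (T τ : ℝ) (hT : 0 < T) (hτ : 0 < τ) (hcons : (N : ℝ) * τ = (M : ℝ) * T)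
    (G : (Fin (2 * r + 1) → Fin d → ℝ) → Fin d → ℝ) (hG : ContDiff ℝ 1 G)
    (y : ℝ → Fin d → ℝ) (hyC1 : ContDiff ℝ 1 y) (hyper : ∀ t, y (t + T) = y t)
    (hyprof : SatProfile d r G y τ)
    (lam : ℂ) (φ : ℝ) (hφ : φ = 2 * Real.pi * (l : ℝ) / (N : ℝ))
    (ζ : ℝ → Fin d → ℂ) (hζne : ζ ≠ 0) (hζper : ∀ t, ζ (t + T) = ζ t)
    (hζC1 : ContDiff ℝ 1 ζ)
    (hMSE : SatMSE d r (Amat d r G y τ) τ lam φ ζ) :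
    (∀ (n : ℤ) (t : ℝ), bundleZ d lam φ τ ζ (n + (N : ℤ)) t = bundleZ d lam φ τ ζ n t) ∧
    (¬ ∀ (n : ℤ) (t : ℝ), bundleZ d lam φ τ ζ n t = 0) ∧
    (∀ (n : ℤ) (t : ℝ), HasDerivAt (fun s => bundleZ d lam φ τ ζ n s)
        (∑ j : Fin (2 * r + 1),
          (Amat d r G y τ (t - (n : ℝ) * τ) j).mulVec
            (bundleZ d lam φ τ ζ (n + (((j : ℕ) : ℤ) - (r : ℤ))) t)) t) ∧
    (∀ (n : ℤ) (t : ℝ), bundleZ d lam φ τ ζ n (t + T) =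
        Complex.exp (lam * (T : ℂ)) • bundleZ d lam φ τ ζ n t) := by
  have hNne : (N:ℝ) ≠ 0 := by positivity
  have hper : Function.Periodic ζ T := hζper
  have hζMT : ∀ s : ℝ, ζ (s - (M:ℝ) * T) = ζ s := fun s => hper.sub_nat_mul_eq M
  have hNφ : ((N:ℝ) * φ) = 2 * Real.pi * (l:ℝ) := by
    rw [hφ]; field_simp
  have hexpN : Complex.exp (Complex.I * (((N:ℝ) * φ : ℝ) : ℂ)) = 1 := by
    rw [hNφ]
    have : (Complex.I * ((2 * Real.pi * (l:ℝ) : ℝ) : ℂ)) = (l:ℤ) * (2 * Real.pi * Complex.I) := by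
      push_cast; ring
    rw [this, Complex.exp_int_mul_two_pi_mul_I]
  refine ⟨?_, ?_, ?_, ?_⟩
  · intro n t
    funext k
    show Complex.exp _ * ζ _ k = Complex.exp _ * ζ _ k
    have h1 : (((n + (N:ℤ) : ℤ)):ℝ) = (n:ℝ) + (N:ℝ) := by push_cast; ring
    simp only [bundleZ, h1]
    have h2 : lam * (t:ℂ) + Complex.I * ((((n:ℝ) + (N:ℝ)) * φ : ℝ) : ℂ)
        = (lam * (t:ℂ) + Complex.I * (((n:ℝ) * φ : ℝ) : ℂ)) + Complex.I * (((N:ℝ) * φ : ℝ) : ℂ) := by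
      push_cast; ring
    rw [h2, Complex.exp_add, hexpN, mul_one]
    have h3 : t - ((n:ℝ) + (N:ℝ)) * τ = (t - (n:ℝ) * τ) - (M:ℝ) * T := by
      rw [← hcons]; ring
    rw [h3, hζMT]
  · intro hcon
    apply hζne
    funext t k
    have := hcon 0 t
    have h0 := congrFun this k
    simp only [bundleZ, Int.cast_zero, zero_mul, sub_zero, Pi.zero_apply] at h0
    have hex : Complex.exp (lam * (t:ℂ) + Complex.I * ((0 * φ : ℝ) : ℂ)) ≠ 0 :=
      Complex.exp_ne_zero _
    simpa [mul_eq_zero, hex] using h0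
  · intro n t
    set c : ℝ := (n:ℝ) * τ with hc
    set E : ℝ → ℂ := fun s => Complex.exp (lam * (s:ℂ) + Complex.I * (((n:ℝ) * φ : ℝ) : ℂ)) with hE
    have hEd : HasDerivAt E (lam * E t) t := by
      have h1 : HasDerivAt (fun s : ℝ => lam * (s:ℂ) + Complex.I * (((n:ℝ) * φ : ℝ) : ℂ)) lam t := by
        have h0 : HasDerivAt (fun s : ℝ => (s : ℂ)) 1 t := by
          simpa using (hasDerivAt_id t).ofReal_comp
        simpa using (h0.const_mul lam).add_const (Complex.I * (((n:ℝ) * φ : ℝ) : ℂ))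
      simpa [hE, mul_comm] using h1.cexp
    have hζd := hMSE (t - c)
    have hsh : HasDerivAt (fun s : ℝ => ζ (s - c))
        (-lam • ζ (t - c) + ∑ j : Fin (2 * r + 1),
          Complex.exp (Complex.I * ((mShift r j * φ : ℝ) : ℂ)) •
            (Amat d r G y τ (t - c) j).mulVec (ζ (t - c - mShift r j * τ))) t := by
      have := hζd.scomp t ((hasDerivAt_id t).sub_const c)
      rw [one_smul] at this
      exact this
    have hprod := hEd.smul hsh
    have hfun : (fun s => bundleZ d lam φ τ ζ n s) = fun s => E s • ζ (s - c) := by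
      funext s k
      simp [bundleZ, hE, hc, Pi.smul_apply, smul_eq_mul]
    rw [hfun]
    refine hprod.congr_deriv (Eq.symm ?_)
    have hterm : ∀ j : Fin (2 * r + 1),
        (Amat d r G y τ (t - c) j).mulVec
            (bundleZ d lam φ τ ζ (n + ((((j:ℕ):ℤ)) - (r:ℤ))) t)
        = E t • (Complex.exp (Complex.I * ((mShift r j * φ : ℝ) : ℂ)) •
            (Amat d r G y τ (t - c) j).mulVec (ζ (t - c - mShift r j * τ))) := by
      intro j
      have hb : bundleZ d lam φ τ ζ (n + ((((j:ℕ):ℤ)) - (r:ℤ))) t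
          = (E t * Complex.exp (Complex.I * ((mShift r j * φ : ℝ) : ℂ))) •
              ζ (t - c - mShift r j * τ) := by
        have h1 : (((n + ((((j:ℕ):ℤ)) - (r:ℤ)) : ℤ)):ℝ) = (n:ℝ) + mShift r j := by
          simp only [mShift]; push_cast; ring
        have h2 : t - ((n:ℝ) + mShift r j) * τ = t - c - mShift r j * τ := by
          rw [hc]; ring
        funext k
        simp only [bundleZ, Pi.smul_apply, smul_eq_mul, hE]
        rw [h1, h2, ← Complex.exp_add]
        congr 2
        push_cast; ring
      rw [hb, Matrix.mulVec_smul, mul_smul]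
    rw [Finset.sum_congr rfl (fun j _ => hterm j), ← Finset.smul_sum]
    rw [smul_add, smul_smul]
    have h4 : (E t * -lam) • ζ (t - c) = -((lam * E t) • ζ (t - c)) := by
      rw [← neg_smul]; congr 1; ring
    rw [h4]
    abel
  · intro n t
    funext k
    show Complex.exp _ * ζ _ k = _
    simp only [bundleZ, Pi.smul_apply, smul_eq_mul]
    have h1 : lam * ((t + T : ℝ) : ℂ) + Complex.I * (((n:ℝ) * φ : ℝ) : ℂ)
        = lam * (T:ℂ) + (lam * (t:ℂ) + Complex.I * (((n:ℝ) * φ : ℝ) : ℂ)) := by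
      push_cast; ring
    have h2 : t + T - (n:ℝ) * τ = (t - (n:ℝ) * τ) + T := by ring
    rw [h1, Complex.exp_add, h2, hζper, mul_assoc]

end
end

section
/- Suppose μ ∈ ℂ and a nonzero C¹ function z : ℝ → (ℂ^d)^N satisfy the Floquet problem for the DTW, i.e., z_n'(t) = Σ_{|m|≤r} A_m(t−nτ) z_{n+m}(t) for all n and t (indices mod N) and z(t+T) = μ z(t) for all t. Then necessarily μ ≠ 0, and there exist l ∈ {1,…,N} and a nonzero T-periodic C¹ function ζ : ℝ → ℂ^d such that the triple (λ, φ, ζ) = (Log(μ)/T, 2πl/N, ζ) satisfies the master stability equation, where Log denotes the principal complex logarithm. -/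
noncomputable section

/-- Every Floquet multiplier `μ` of the DTW with nonzero `C¹` bundle `z`
is nonzero, and corresponds to a solution `(Log μ / T, 2πl/N, ζ)` of the master stability
equation for some `l ∈ {1,…,N}` and a nonzero `T`-periodic `C¹` function `ζ`. -/
theorem floquet_gives_mse
    (N d r M : ℕ) (hN : 2 ≤ N) (hd : 1 ≤ d) (hr : 1 ≤ r) (hM : 0 < M)
    (T τ : ℝ) (hT : 0 < T) (hτ : 0 < τ) (hcons : (N : ℝ) * τ = (M : ℝ) * T)
    (G : (Fin (2 * r + 1) → Fin d → ℝ) → Fin d → ℝ) (hG : ContDiff ℝ 1 G)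
    (y : ℝ → Fin d → ℝ) (hyC1 : ContDiff ℝ 1 y) (hyper : ∀ t, y (t + T) = y t)
    (hyprof : SatProfile d r G y τ)
    (μ : ℂ) (z : ZMod N → ℝ → Fin d → ℂ)
    (hzC1 : ∀ n, ContDiff ℝ 1 (z n)) (hzne : z ≠ 0)
    (hz : SatFloquet N d r (Amat d r G y τ) τ T μ z) :
    μ ≠ 0 ∧ ∃ l : ℕ, 1 ≤ l ∧ l ≤ N ∧ ∃ ζ : ℝ → Fin d → ℂ,
      ζ ≠ 0 ∧ (∀ t, ζ (t + T) = ζ t) ∧ ContDiff ℝ 1 ζ ∧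
      SatMSE d r (Amat d r G y τ) τ (Complex.log μ / (T : ℂ))
        (2 * Real.pi * (l : ℝ) / (N : ℝ)) ζ := by
  classical
  haveI : NeZero N := ⟨by omega⟩
  obtain ⟨hzode, hzper⟩ := hz
  set A := Amat d r G y τ with hA
  -- μ ≠ 0
  have hμ : μ ≠ 0 := by
    rintro rfl
    apply hzne
    funext n t
    have h := hzper n (t - T)
    rw [sub_add_cancel] at h
    simpa using h
  refine ⟨hμ, ?_⟩
  have hTC : (T : ℂ) ≠ 0 := by exact_mod_cast hT.ne'
  set lam := Complex.log μ / (T : ℂ) with hlam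
  have hexp : Complex.exp (lam * T) = μ := by
    rw [hlam, div_mul_cancel₀ _ hTC, Complex.exp_log hμ]
  -- the exponential weight
  set E : ℝ → ℂ := fun t => Complex.exp (-(lam * t)) with hE
  have hEne : ∀ t, E t ≠ 0 := fun t => Complex.exp_ne_zero _
  have hE' : ∀ t : ℝ, HasDerivAt E (-lam * E t) t := by
    intro t
    have h1 : HasDerivAt (fun w : ℂ => Complex.exp (-(lam * w)))
        (-lam * Complex.exp (-(lam * (t : ℂ)))) (t : ℂ) := by
      have h2 : HasDerivAt (fun w : ℂ => -(lam * w)) (-lam) (t : ℂ) := by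
        have h3 := ((hasDerivAt_id (t : ℂ)).const_mul lam).neg
        rw [mul_one] at h3
        exact h3
      have h4 := (Complex.hasDerivAt_exp (-(lam * (t : ℂ)))).comp (t : ℂ) h2
      exact h4.congr_deriv (mul_comm _ _)
    exact h1.comp_ofReal
  have hEC : ContDiff ℝ 1 E := by
    apply Complex.contDiff_exp.comp
    exact (contDiff_const.mul Complex.ofRealCLM.contDiff).neg
  -- u n t = E t • z n t
  set u : ZMod N → ℝ → Fin d → ℂ := fun n t => E t • z n t with hu
  have huC : ∀ n, ContDiff ℝ 1 (u n) := by
    intro n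
    rw [hu]
    refine contDiff_pi.mpr fun k => ?_
    simp only [Pi.smul_apply, smul_eq_mul]
    exact hEC.mul ((contDiff_pi.mp (hzC1 n)) k)
  have hu' : ∀ (n : ZMod N) (t : ℝ), HasDerivAt (u n)
      (-lam • u n t + ∑ j : Fin (2 * r + 1),
        (A (t - ((n.val : ℕ) : ℝ) * τ) j).mulVec (u (n + nodeOff N r j) t)) t := by
    intro n t
    have h := (hE' t).smul (hzode n t)
    have heq : E t • (∑ j : Fin (2 * r + 1),
          (A (t - ((n.val : ℕ) : ℝ) * τ) j).mulVec (z (n + nodeOff N r j) t))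
        + (-lam * E t) • z n t
        = -lam • u n t + ∑ j : Fin (2 * r + 1),
          (A (t - ((n.val : ℕ) : ℝ) * τ) j).mulVec (u (n + nodeOff N r j) t) := by
      rw [Finset.smul_sum, add_comm]
      congr 1
      · rw [hu, mul_smul]
      · exact Finset.sum_congr rfl fun j _ => (Matrix.mulVec_smul _ _ _).symm
    rw [heq] at h
    exact h
  have huper : ∀ n : ZMod N, Function.Periodic (u n) T := by
    intro n t
    have hmul : E (t + T) * μ = E t := by
      have : ((t + T : ℝ) : ℂ) = (t : ℂ) + (T : ℂ) := by push_cast; ring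
      rw [hE]
      simp only [this]
      rw [← hexp, ← Complex.exp_add]
      congr 1
      ring
    calc u n (t + T) = E (t + T) • (μ • z n t) := by rw [hu]; simp [hzper n t]
      _ = (E (t + T) * μ) • z n t := by rw [smul_smul]
      _ = u n t := by rw [hmul]
  have huint : ∀ (n : ZMod N) (k : ℤ) (t : ℝ), u n (t + (k : ℝ) * T) = u n t :=
    fun n k t => ((huper n).int_mul k) t
  -- w n t = u n (t + n.val * τ)
  set w : ZMod N → ℝ → Fin d → ℂ := fun n t => u n (t + ((n.val : ℕ) : ℝ) * τ) with hw
  have hwC : ∀ n, ContDiff ℝ 1 (w n) := by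
    intro n
    rw [hw]
    exact (huC n).comp (contDiff_id.add contDiff_const)
  have hwper : ∀ (n : ZMod N) (t : ℝ), w n (t + T) = w n t := by
    intro n t
    rw [hw]
    simp only
    rw [show t + T + ((n.val : ℕ) : ℝ) * τ = (t + ((n.val : ℕ) : ℝ) * τ) + T by ring]
    exact huper n _
  -- the key index-shift identity
  have hshift : ∀ (n : ZMod N) (j : Fin (2 * r + 1)) (t : ℝ),
      u (n + nodeOff N r j) (t + ((n.val : ℕ) : ℝ) * τ)
        = w (n + nodeOff N r j) (t - mShift r j * τ) := by
    intro n j t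
    set X := n + nodeOff N r j with hX
    set a : ℤ := (n.val : ℤ) + ((j : ℤ) - (r : ℤ)) - (X.val : ℤ) with ha
    have hdvd : (N : ℤ) ∣ a := by
      rw [← ZMod.intCast_zmod_eq_zero_iff_dvd]
      rw [ha]
      push_cast [ZMod.natCast_val, ZMod.intCast_cast, ZMod.cast_id]
      rw [hX, nodeOff]
      push_cast
      ring
    obtain ⟨q, hq⟩ := hdvd
    have harg : t + ((n.val : ℕ) : ℝ) * τ
        = (t - mShift r j * τ + ((X.val : ℕ) : ℝ) * τ) + ((q * M : ℤ) : ℝ) * T := by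
      have h1 : ((q * M : ℤ) : ℝ) * T = (q : ℝ) * ((M : ℝ) * T) := by push_cast; ring
      rw [h1, ← hcons]
      have h2 : (a : ℝ) = (q : ℝ) * (N : ℝ) := by
        rw [hq]; push_cast; ring
      have h3 : (a : ℝ) = (n.val : ℝ) + (((j : ℕ) : ℝ) - (r : ℝ)) - (X.val : ℝ) := by
        rw [ha]; push_cast; ring
      rw [mShift]
      nlinarith [h2, h3]
    rw [harg, huint X (q * M) _]
  -- derivative of w
  have hw' : ∀ (n : ZMod N) (t : ℝ), HasDerivAt (w n)
      (-lam • w n t + ∑ j : Fin (2 * r + 1),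
        (A t j).mulVec (w (n + nodeOff N r j) (t - mShift r j * τ))) t := by
    intro n t
    set c : ℝ := ((n.val : ℕ) : ℝ) * τ with hc
    have hh : HasDerivAt (fun s : ℝ => s + c) 1 t := (hasDerivAt_id t).add_const c
    have h0 := (hu' n (t + c)).scomp t hh
    have hfun : (u n) ∘ (fun s : ℝ => s + c) = w n := by
      funext s; rfl
    rw [hfun, one_smul] at h0
    have heq : -lam • u n (t + c) + ∑ j : Fin (2 * r + 1),
          (A (t + c - ((n.val : ℕ) : ℝ) * τ) j).mulVec (u (n + nodeOff N r j) (t + c))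
        = -lam • w n t + ∑ j : Fin (2 * r + 1),
          (A t j).mulVec (w (n + nodeOff N r j) (t - mShift r j * τ)) := by
      congr 1
      refine Finset.sum_congr rfl fun j _ => ?_
      rw [show t + c - ((n.val : ℕ) : ℝ) * τ = t by rw [hc]; ring]
      rw [hshift n j t]
    rw [heq] at h0
    exact h0
  -- the primitive root
  set ω : ℂ := Complex.exp (2 * (Real.pi : ℂ) * Complex.I / (N : ℂ)) with hωdef
  have hω : IsPrimitiveRoot ω N := Complex.isPrimitiveRoot_exp N (by omega)
  have hωne : ω ≠ 0 := Complex.exp_ne_zero _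
  have hωcong : ∀ a b : ℤ, ((a : ZMod N) = (b : ZMod N)) → ω ^ a = ω ^ b := by
    intro a b hab
    have hdvd : (N : ℤ) ∣ (a - b) := by
      rw [← ZMod.intCast_zmod_eq_zero_iff_dvd]
      push_cast
      rw [hab]; ring
    have h1 : ω ^ (a - b) = 1 := (hω.zpow_eq_one_iff_dvd _).mpr hdvd
    calc ω ^ a = ω ^ (b + (a - b)) := by ring_nf
      _ = ω ^ b * ω ^ (a - b) := zpow_add₀ hωne _ _
      _ = ω ^ b := by rw [h1, mul_one]
  -- the candidate MSE solutions
  set ζ : ℕ → ℝ → Fin d → ℂ :=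
    fun l t => ∑ n : ZMod N, ω ^ (-((l : ℤ) * (n.val : ℤ))) • w n t with hζ
  have hζC : ∀ l, ContDiff ℝ 1 (ζ l) := by
    intro l
    rw [hζ]
    exact ContDiff.sum fun n _ => (hwC n).const_smul _
  have hζper : ∀ (l : ℕ) (t : ℝ), ζ l (t + T) = ζ l t := by
    intro l t
    rw [hζ]
    simp only
    exact Finset.sum_congr rfl fun n _ => by rw [hwper n t]
  -- derivative of ζ l
  have hζ' : ∀ (l : ℕ) (t : ℝ), HasDerivAt (ζ l)
      (-lam • ζ l t + ∑ j : Fin (2 * r + 1),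
        (ω ^ ((((j : ℕ) : ℤ) - (r : ℤ)) * (l : ℤ))) •
          (A t j).mulVec (ζ l (t - mShift r j * τ))) t := by
    intro l t
    have h0 : HasDerivAt (ζ l)
        (∑ n : ZMod N, ω ^ (-((l : ℤ) * (n.val : ℤ))) •
          (-lam • w n t + ∑ j : Fin (2 * r + 1),
            (A t j).mulVec (w (n + nodeOff N r j) (t - mShift r j * τ)))) t := by
      rw [hζ]
      exact HasDerivAt.fun_sum fun n _ => (hw' n t).const_smul (ω ^ (-((l : ℤ) * (n.val : ℤ))))
    have heq : (∑ n : ZMod N, ω ^ (-((l : ℤ) * (n.val : ℤ))) •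
          (-lam • w n t + ∑ j : Fin (2 * r + 1),
            (A t j).mulVec (w (n + nodeOff N r j) (t - mShift r j * τ))))
        = -lam • ζ l t + ∑ j : Fin (2 * r + 1),
            (ω ^ ((((j : ℕ) : ℤ) - (r : ℤ)) * (l : ℤ))) •
              (A t j).mulVec (ζ l (t - mShift r j * τ)) := by
      simp only [smul_add]
      rw [Finset.sum_add_distrib]
      congr 1
      · rw [hζ, Finset.smul_sum]
        exact Finset.sum_congr rfl fun n _ => smul_comm _ _ _
      · simp only [Finset.smul_sum]
        rw [Finset.sum_comm]
        refine Finset.sum_congr rfl fun j _ => ?_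
        calc ∑ n : ZMod N, ω ^ (-((l : ℤ) * (n.val : ℤ))) •
              (A t j).mulVec (w (n + nodeOff N r j) (t - mShift r j * τ))
            = ∑ n : ZMod N, (ω ^ ((((j : ℕ) : ℤ) - (r : ℤ)) * (l : ℤ))
                * ω ^ (-((l : ℤ) * (n.val : ℤ)))) •
              (A t j).mulVec (w n (t - mShift r j * τ)) := by
              refine Fintype.sum_equiv (Equiv.addRight (nodeOff N r j)) _ _ fun n => ?_
              simp only [Equiv.coe_addRight]
              congr 1
              rw [← zpow_add₀ hωne]
              refine hωcong _ _ ?_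
              push_cast [ZMod.natCast_val, ZMod.intCast_cast, ZMod.cast_id]
              rw [nodeOff]
              push_cast
              ring
          _ = ω ^ ((((j : ℕ) : ℤ) - (r : ℤ)) * (l : ℤ)) •
              (A t j).mulVec (ζ l (t - mShift r j * τ)) := by
              rw [hζ]
              simp only
              rw [← Matrix.mulVec_smul, Finset.smul_sum, ← Matrix.mulVecLin_apply,
                map_sum]
              refine Finset.sum_congr rfl fun n _ => ?_
              rw [map_smul, map_smul, Matrix.mulVecLin_apply, mul_smul]
    rw [heq] at h0
    exact h0
  -- ζ l satisfies the MSE with φ = 2π l / N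
  have hmse : ∀ l : ℕ, SatMSE d r A τ lam (2 * Real.pi * (l : ℝ) / (N : ℝ)) (ζ l) := by
    intro l t
    have hcoef : ∀ j : Fin (2 * r + 1),
        Complex.exp (Complex.I *
          ((mShift r j * (2 * Real.pi * (l : ℝ) / (N : ℝ)) : ℝ) : ℂ))
        = ω ^ ((((j : ℕ) : ℤ) - (r : ℤ)) * (l : ℤ)) := by
      intro j
      rw [hωdef, ← Complex.exp_int_mul]
      congr 1
      have hNC : (N : ℂ) ≠ 0 := by
        exact_mod_cast (Nat.cast_ne_zero (R := ℂ)).mpr (by omega)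
      rw [mShift]
      push_cast
      field_simp
    have h := hζ' l t
    refine HasDerivAt.congr_deriv h ?_
    congr 1
    exact Finset.sum_congr rfl fun j _ => by rw [hcoef j]
  -- nonvanishing via discrete Fourier inversion
  have hzpt : ∃ (n : ZMod N) (t : ℝ) (k : Fin d), z n t k ≠ 0 := by
    by_contra h
    push_neg at h
    exact hzne (funext fun n => funext fun t => funext fun k => h n t k)
  obtain ⟨n₀, t₀, k₀, hz0⟩ := hzpt
  set s₀ : ℝ := t₀ - ((n₀.val : ℕ) : ℝ) * τ with hs₀
  have hwne : w n₀ s₀ k₀ ≠ 0 := by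
    have : w n₀ s₀ = u n₀ t₀ := by
      rw [hw]
      simp only
      rw [hs₀, sub_add_cancel]
    rw [this, hu]
    simp only [Pi.smul_apply, smul_eq_mul]
    exact mul_ne_zero (hEne t₀) hz0
  have hinv : ∑ l ∈ Finset.range N, ω ^ ((l : ℤ) * (n₀.val : ℤ)) * ζ l s₀ k₀
      = (N : ℂ) * w n₀ s₀ k₀ := by
    have hterm : ∀ l ∈ Finset.range N,
        ω ^ ((l : ℤ) * (n₀.val : ℤ)) * ζ l s₀ k₀
        = ∑ n : ZMod N, ω ^ ((l : ℤ) * ((n₀.val : ℤ) - (n.val : ℤ))) * w n s₀ k₀ := by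
      intro l _
      rw [hζ]
      simp only [Finset.sum_apply, Pi.smul_apply, smul_eq_mul]
      rw [Finset.mul_sum]
      refine Finset.sum_congr rfl fun n _ => ?_
      rw [← mul_assoc, ← zpow_add₀ hωne]
      congr 2
      ring
    rw [Finset.sum_congr rfl hterm, Finset.sum_comm]
    have hNinner : ∀ n : ZMod N,
        (∑ l ∈ Finset.range N, ω ^ ((l : ℤ) * ((n₀.val : ℤ) - (n.val : ℤ))))
        = if n = n₀ then (N : ℂ) else 0 := by
      intro n
      by_cases hn : n = n₀
      · subst hn
        simp
      · rw [if_neg hn]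
        set a : ℤ := (n₀.val : ℤ) - (n.val : ℤ) with haa
        have hterm2 : ∀ l ∈ Finset.range N, ω ^ ((l : ℤ) * a) = (ω ^ a) ^ l := by
          intro l _
          rw [← zpow_natCast (ω ^ a) l, ← zpow_mul]
          ring_nf
        rw [Finset.sum_congr rfl hterm2]
        have hane : ω ^ a ≠ 1 := by
          intro hcon
          have hdvd := (hω.zpow_eq_one_iff_dvd a).mp hcon
          have h1 : (n₀.val : ℤ) < N := by exact_mod_cast ZMod.val_lt n₀
          have h2 : (n.val : ℤ) < N := by exact_mod_cast ZMod.val_lt n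
          have h3 : a ≠ 0 := by
            intro h0
            apply hn
            apply ZMod.val_injective
            omega
          have habs : |a| < (N : ℤ) := by
            rw [abs_lt]
            constructor <;> omega
          exact h3 (Int.eq_zero_of_abs_lt_dvd hdvd habs)
        rw [geom_sum_eq hane]
        have hpow : (ω ^ a) ^ N = 1 := by
          rw [← zpow_natCast (ω ^ a) N, ← zpow_mul, mul_comm, zpow_mul,
            zpow_natCast, hω.pow_eq_one, one_zpow]
        rw [hpow]
        simp
    rw [Finset.sum_congr rfl fun n _ => by rw [← Finset.sum_mul, hNinner n]]
    simp
  have hlex : ∃ l₀ ∈ Finset.range N, ζ l₀ s₀ k₀ ≠ 0 := by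
    by_contra h
    push_neg at h
    have hzero : ∑ l ∈ Finset.range N, ω ^ ((l : ℤ) * (n₀.val : ℤ)) * ζ l s₀ k₀ = 0 :=
      Finset.sum_eq_zero fun l hl => by rw [h l hl, mul_zero]
    rw [hinv] at hzero
    have hNne : (N : ℂ) ≠ 0 := by
      exact_mod_cast (Nat.cast_ne_zero (R := ℂ)).mpr (by omega)
    exact hwne ((mul_eq_zero.mp hzero).resolve_left hNne)
  obtain ⟨l₀, hl₀mem, hl₀ne⟩ := hlex
  have hl₀lt : l₀ < N := Finset.mem_range.mp hl₀mem
  set l : ℕ := if l₀ = 0 then N else l₀ with hldef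
  have hl1 : 1 ≤ l := by rw [hldef]; split <;> omega
  have hlN : l ≤ N := by rw [hldef]; split <;> omega
  have hζeq : ζ l = ζ l₀ := by
    funext t
    rw [hζ]
    simp only
    refine Finset.sum_congr rfl fun n _ => ?_
    congr 1
    refine hωcong _ _ ?_
    have : ((l : ℕ) : ZMod N) = ((l₀ : ℕ) : ZMod N) := by
      rw [hldef]
      split
      · subst ‹l₀ = 0›; simp [ZMod.natCast_self]
      · rfl
    push_cast
    rw [show ((l : ℕ) : ZMod N) = ((l₀ : ℕ) : ZMod N) from this]
  refine ⟨l, hl1, hlN, ζ l, ?_, hζper l, hζC l, hmse l⟩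
  rw [hζeq]
  intro hcon
  apply hl₀ne
  rw [hcon]
  rfl


end
end

section
/- Suppose μ* is a simple Floquet multiplier of the DTW (i.e., a simple eigenvalue of the monodromy matrix M = Ξ(T)) with bundle z* = (z*_1,…,z*_N), and set λ* = Log(μ*)/T (principal logarithm). Then there exist a unique l* ∈ {1,…,N} and a nonzero T-periodic C¹ function ζ* : ℝ → ℂ^d such that, with φ* = 2πl*/N, the triple (λ*, φ*, ζ*) satisfies the master stability equation and z*_n(t) = ζ*(t−nτ)·e^{λ* t + i n φ*} for all n = 1,…,N and all t ∈ ℝ. -/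
noncomputable section

section MyAux

open Polynomial Matrix Set

theorem eigenvec_proportional {ι : Type*} [Fintype ι] [DecidableEq ι]
    (B : Matrix ι ι ℂ) (μ : ℂ) (hs : IsSimpleEigenvalue B μ)
    (v₁ v₂ : ι → ℂ) (h1 : B.mulVec v₁ = μ • v₁) (h2 : B.mulVec v₂ = μ • v₂)
    (hv1 : v₁ ≠ 0) : ∃ κ : ℂ, v₂ = κ • v₁ := by
  by_contra hcon
  push_neg at hcon
  have hli : LinearIndependent ℂ ![v₁, v₂] :=
    (LinearIndependent.pair_iff' hv1).2 fun a ha => hcon a ha.symm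
  have hli' : LinearIndepOn ℂ id (Set.range ![v₁, v₂]) :=
    (linearIndepOn_id_range_iff hli.injective).mpr hli
  set tset := hli'.extend (subset_univ _) with htset
  set b : Module.Basis tset ℂ (ι → ℂ) := Module.Basis.extend hli' with hbdef
  haveI : Fintype tset := FiniteDimensional.fintypeBasisIndex b
  have hv1mem : v₁ ∈ tset := hli'.subset_extend _ ⟨0, rfl⟩
  have hv2mem : v₂ ∈ tset := hli'.subset_extend _ ⟨1, rfl⟩
  set j₁ : tset := ⟨v₁, hv1mem⟩ with hj₁
  set j₂ : tset := ⟨v₂, hv2mem⟩ with hj₂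
  have hj12 : j₂ ≠ j₁ := by
    intro h
    refine hcon 1 ?_
    have : v₂ = v₁ := by simpa [hj₁, hj₂, Subtype.ext_iff] using h
    simp [this]
  have hb1 : b j₁ = v₁ := Module.Basis.extend_apply_self _ _
  have hb2 : b j₂ = v₂ := Module.Basis.extend_apply_self _ _
  set f : (ι → ℂ) →ₗ[ℂ] (ι → ℂ) := Matrix.toLin' B with hf
  have hfv1 : f v₁ = μ • v₁ := by rw [hf]; rw [Matrix.toLin'_apply, h1]
  have hfv2 : f v₂ = μ • v₂ := by rw [hf]; rw [Matrix.toLin'_apply, h2]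
  set Mf := LinearMap.toMatrix b b f with hMf
  have hcp : Mf.charpoly = B.charpoly := by
    rw [hMf, LinearMap.charpoly_toMatrix]
    have h3 : f.charpoly = (LinearMap.toMatrix (Pi.basisFun ℂ ι) (Pi.basisFun ℂ ι) f).charpoly :=
      (LinearMap.charpoly_toMatrix f _).symm
    rw [h3, LinearMap.toMatrix_eq_toMatrix', hf, LinearMap.toMatrix'_toLin']
  have hcol : ∀ (jj : tset) (vv : ι → ℂ), b jj = vv → f vv = μ • vv →
      ∀ k, charmatrix Mf k jj = (X - C μ) * (if k = jj then 1 else 0) := by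
    intro jj vv hbv hfvv k
    have hMcol : Mf k jj = μ * (if k = jj then 1 else 0) := by
      rw [hMf, LinearMap.toMatrix_apply, hbv, hfvv, LinearEquiv.map_smul, ← hbv, b.repr_self jj]
      by_cases h : k = jj
      · simp [h]
      · simp [h, Finsupp.single_apply, Ne.symm h]
    rw [charmatrix_apply]
    by_cases h : k = jj
    · subst h; simp [hMcol]
    · simp [h, hMcol, Matrix.one_apply, Ne.symm h]
  have hch1 : ∀ k, charmatrix Mf k j₁ = ((X - C μ) • fun k => (if k = j₁ then (1:ℂ[X]) else 0)) k := by
    intro k; rw [hcol j₁ v₁ hb1 hfv1 k]; simp [smul_eq_mul]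
  -- factor out twice
  set u₁ : tset → ℂ[X] := fun k => if k = j₁ then 1 else 0 with hu₁
  set u₂ : tset → ℂ[X] := fun k => if k = j₂ then 1 else 0 with hu₂
  set M₁ := (charmatrix Mf).updateCol j₁ u₁ with hM₁
  have hch2 : ∀ k, M₁ k j₂ = ((X - C μ) • u₂) k := by
    intro k
    rw [hM₁, Matrix.updateCol_apply, if_neg hj12, hcol j₂ v₂ hb2 hfv2 k]
    simp [hu₂, smul_eq_mul]
  have step1 : Mf.charpoly = (X - C μ) * M₁.det := by
    have e1 : charmatrix Mf = (charmatrix Mf).updateCol j₁ ((X - C μ) • u₁) := by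
      rw [show (X - C μ) • u₁ = fun k => charmatrix Mf k j₁ from funext fun k => (hch1 k).symm]
      exact (Matrix.updateCol_eq_self _ _).symm
    rw [Matrix.charpoly]
    conv_lhs => rw [e1]
    rw [Matrix.det_updateCol_smul]
  have step2 : M₁.det = (X - C μ) * (M₁.updateCol j₂ u₂).det := by
    have e2 : M₁ = M₁.updateCol j₂ ((X - C μ) • u₂) := by
      rw [show (X - C μ) • u₂ = fun k => M₁ k j₂ from funext fun k => (hch2 k).symm]
      exact (Matrix.updateCol_eq_self _ _).symm
    conv_lhs => rw [e2]
    rw [Matrix.det_updateCol_smul]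
  have hdvd : (X - C μ) ^ 2 ∣ B.charpoly := by
    rw [← hcp, step1, step2]
    exact ⟨(M₁.updateCol j₂ u₂).det, by ring⟩
  have h2le : 2 ≤ rootMultiplicity μ B.charpoly :=
    (le_rootMultiplicity_iff (Matrix.charpoly_monic B).ne_zero).2 hdvd
  rw [IsSimpleEigenvalue] at hs; omega


open Set

section AnaAux

variable {d r : ℕ} {G : (Fin (2 * r + 1) → Fin d → ℝ) → Fin d → ℝ}
  {y : ℝ → Fin d → ℝ} {τ T : ℝ}

theorem waveArgs_cont (hy : Continuous y) : Continuous fun t => waveArgs d r y τ t :=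
  continuous_pi fun j => hy.comp (continuous_id.sub continuous_const)

theorem waveArgs_periodic (hyper : ∀ t, y (t + T) = y t) (t : ℝ) :
    waveArgs d r y τ (t + T) = waveArgs d r y τ t := by
  funext j
  show y (t + T - (((j : ℕ) : ℝ) - (r : ℝ)) * τ) = _
  rw [show t + T - (((j : ℕ) : ℝ) - (r : ℝ)) * τ
      = (t - (((j : ℕ) : ℝ) - (r : ℝ)) * τ) + T by ring, hyper]
  rfl

theorem Amat_periodic (hyper : ∀ t, y (t + T) = y t) (t : ℝ) :
    Amat d r G y τ (t + T) = Amat d r G y τ t := by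
  unfold Amat AmatR
  rw [waveArgs_periodic hyper]

theorem Amat_periodic_nat (hyper : ∀ t, y (t + T) = y t) (m : ℕ) (t : ℝ) :
    Amat d r G y τ (t + (m : ℝ) * T) = Amat d r G y τ t := by
  induction m with
  | zero => simp
  | succ k ih =>
    have : t + ((k : ℝ) + 1) * T = (t + (k : ℝ) * T) + T := by ring
    push_cast
    rw [this, Amat_periodic hyper, ih]

/-- Sum of norms of all entries of all the `A_m(t)`. -/
def entSum (d r : ℕ) (G : (Fin (2 * r + 1) → Fin d → ℝ) → Fin d → ℝ)
    (y : ℝ → Fin d → ℝ) (τ : ℝ) (t : ℝ) : ℝ :=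
  ∑ j : Fin (2 * r + 1), ∑ i : Fin d, ∑ k : Fin d, ‖(Amat d r G y τ t j) i k‖

theorem entSum_nonneg (t : ℝ) : 0 ≤ entSum d r G y τ t := by
  refine Finset.sum_nonneg fun j _ => Finset.sum_nonneg fun i _ =>
    Finset.sum_nonneg fun k _ => norm_nonneg _

theorem entSum_cont (hG : ContDiff ℝ 1 G) (hy : Continuous y) :
    Continuous (entSum d r G y τ) := by
  refine continuous_finset_sum _ fun j _ => continuous_finset_sum _ fun i _ =>
    continuous_finset_sum _ fun k _ => ?_
  have h1 : Continuous fun t => fderiv ℝ G (waveArgs d r y τ t) :=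
    (hG.continuous_fderiv one_ne_zero).comp (waveArgs_cont hy)
  have h2 : Continuous fun t =>
      fderiv ℝ G (waveArgs d r y τ t) (Pi.single j (Pi.single k 1)) :=
    h1.clm_apply continuous_const
  have h3 : Continuous fun t => (Amat d r G y τ t j) i k := by
    have : Continuous fun t =>
        fderiv ℝ G (waveArgs d r y τ t) (Pi.single j (Pi.single k 1)) i :=
      (continuous_apply i).comp h2
    exact Complex.continuous_ofReal.comp this
  exact h3.norm

theorem exists_entSum_bound (hG : ContDiff ℝ 1 G) (hy : Continuous y)
    (hyper : ∀ t, y (t + T) = y t) (hT : 0 < T) :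
    ∃ C : ℝ, 0 ≤ C ∧ ∀ t : ℝ, entSum d r G y τ t ≤ C := by
  have hper : Function.Periodic (entSum d r G y τ) T := by
    intro t; unfold entSum; rw [Amat_periodic hyper]
  obtain ⟨x, hx, hmax⟩ := isCompact_Icc.exists_isMaxOn (⟨0, le_refl 0, hT.le⟩ :
    (Icc (0:ℝ) T).Nonempty) ((entSum_cont hG hy).continuousOn)
  refine ⟨max (entSum d r G y τ x) 0, le_max_right _ _, fun t => ?_⟩
  obtain ⟨s, hs, hts⟩ := hper.exists_mem_Ico₀ hT t
  calc entSum d r G y τ t = entSum d r G y τ s := hts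
    _ ≤ entSum d r G y τ x := hmax (Ico_subset_Icc_self hs)
    _ ≤ max _ 0 := le_max_left _ _

end AnaAux

/-- The vector field of the linear Floquet ODE. -/
def KV (N d r : ℕ) [NeZero N] (A : ℝ → Fin (2 * r + 1) → Matrix (Fin d) (Fin d) ℂ)
    (τ t : ℝ) (w : ZMod N × Fin d → ℂ) : ZMod N × Fin d → ℂ :=
  fun p => (∑ j : Fin (2 * r + 1),
    (A (t - ((p.1.val : ℕ) : ℝ) * τ) j).mulVec (fun k => w (p.1 + nodeOff N r j, k))) p.2

section KVsec

variable {N d r : ℕ} [NeZero N] {A : ℝ → Fin (2 * r + 1) → Matrix (Fin d) (Fin d) ℂ} {τ : ℝ}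

theorem KV_sub (t : ℝ) (w w' : ZMod N × Fin d → ℂ) :
    KV N d r A τ t (w - w') = KV N d r A τ t w - KV N d r A τ t w' := by
  funext p
  simp only [KV, Pi.sub_apply, Finset.sum_apply, Matrix.mulVec, dotProduct,
    mul_sub, Finset.sum_sub_distrib]

theorem KV_smul (t : ℝ) (c : ℂ) (w : ZMod N × Fin d → ℂ) :
    KV N d r A τ t (c • w) = c • KV N d r A τ t w := by
  funext p
  simp only [KV, Pi.smul_apply, Finset.sum_apply, Matrix.mulVec, dotProduct,
    smul_eq_mul, Finset.mul_sum]
  congr 1; funext j; congr 1; funext k; ring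

theorem KV_norm_le {C : ℝ} (hC : 0 ≤ C)
    {d' r' : ℕ} {G : (Fin (2 * r' + 1) → Fin d' → ℝ) → Fin d' → ℝ} {y : ℝ → Fin d' → ℝ}
    (hCb : ∀ t, entSum d' r' G y τ t ≤ C) (t : ℝ) (u : ZMod N × Fin d' → ℂ) :
    ‖KV N d' r' (Amat d' r' G y τ) τ t u‖ ≤ C * ‖u‖ := by
  rw [pi_norm_le_iff_of_nonneg (by positivity)]
  intro p
  have step1 : ‖KV N d' r' (Amat d' r' G y τ) τ t u p‖ ≤
      ∑ j : Fin (2 * r' + 1), ∑ k : Fin d',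
        ‖(Amat d' r' G y τ (t - ((p.1.val : ℕ) : ℝ) * τ) j) p.2 k‖ * ‖u‖ := by
    unfold KV
    rw [Finset.sum_apply]
    refine (norm_sum_le _ _).trans (Finset.sum_le_sum fun j _ => ?_)
    simp only [Matrix.mulVec, dotProduct]
    refine (norm_sum_le _ _).trans (Finset.sum_le_sum fun k _ => ?_)
    rw [norm_mul]
    exact mul_le_mul_of_nonneg_left (norm_le_pi_norm u _) (norm_nonneg _)
  refine step1.trans ?_
  simp only [← Finset.sum_mul]
  refine mul_le_mul_of_nonneg_right ((le_trans ?_ (hCb (t - ((p.1.val : ℕ) : ℝ) * τ)))) (norm_nonneg u)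
  unfold entSum
  refine Finset.sum_le_sum fun j _ => ?_
  exact Finset.single_le_sum (f := fun i => ∑ k, ‖(Amat d' r' G y τ _ j) i k‖)
    (fun i _ => Finset.sum_nonneg fun k _ => norm_nonneg _) (Finset.mem_univ p.2)

theorem KV_lipschitz {C : ℝ} (hC : 0 ≤ C)
    {d' r' : ℕ} {G : (Fin (2 * r' + 1) → Fin d' → ℝ) → Fin d' → ℝ} {y : ℝ → Fin d' → ℝ}
    (hCb : ∀ t, entSum d' r' G y τ t ≤ C) (t : ℝ) :
    LipschitzWith C.toNNReal (KV N d' r' (Amat d' r' G y τ) τ t) := by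
  refine LipschitzWith.of_dist_le_mul fun w w' => ?_
  rw [dist_eq_norm, dist_eq_norm, ← KV_sub, Real.coe_toNNReal _ hC]
  exact KV_norm_le hC hCb t (w - w')

end KVsec

theorem sol_unique {E : Type*} [NormedAddCommGroup E] [NormedSpace ℝ E]
    {C : NNReal} {F : ℝ → E → E} (hF : ∀ t, LipschitzWith C (F t))
    {f g : ℝ → E} (hf : ∀ t, HasDerivAt f (F t (f t)) t)
    (hg : ∀ t, HasDerivAt g (F t (g t)) t) {t₀ : ℝ} (h0 : f t₀ = g t₀) : f = g := by
  funext t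
  rcases eq_or_ne t t₀ with h | h
  · rw [h, h0]
  · have h1 := min_le_left t₀ t
    have h2 := min_le_right t₀ t
    have h3 := le_max_left t₀ t
    have h4 := le_max_right t₀ t
    refine ODE_solution_unique_of_mem_Ioo (s := fun _ => (univ : Set E))
      (fun t _ => (hF t).lipschitzOnWith)
      (a := min t₀ t - 1) (b := max t₀ t + 1)
      ⟨by linarith, by linarith⟩
      (fun t _ => ⟨hf t, trivial⟩) (fun t _ => ⟨hg t, trivial⟩) h0
      ⟨by linarith, by linarith⟩


end MyAux

/-- A simple Floquet multiplier `μ*` of the DTW, with bundle `z*`,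
admits a unique `l* ∈ {1,…,N}` and a nonzero `T`-periodic `C¹` function `ζ*` such that
`(Log μ*/T, 2πl*/N, ζ*)` solves the master stability equation and
`z*_n(t) = ζ*(t−nτ) e^{λ* t + i n φ*}`. -/
theorem simple_floquet_representation
    (N d r M : ℕ) [NeZero N] (hN : 2 ≤ N) (hd : 1 ≤ d) (hr : 1 ≤ r) (hM : 0 < M)
    (T τ : ℝ) (hT : 0 < T) (hτ : 0 < τ) (hcons : (N : ℝ) * τ = (M : ℝ) * T)
    (G : (Fin (2 * r + 1) → Fin d → ℝ) → Fin d → ℝ) (hG : ContDiff ℝ 1 G)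
    (y : ℝ → Fin d → ℝ) (hyC1 : ContDiff ℝ 1 y) (hyper : ∀ t, y (t + T) = y t)
    (hyprof : SatProfile d r G y τ)
    (Ξ : ℝ → Matrix (ZMod N × Fin d) (ZMod N × Fin d) ℂ)
    (hΞ : IsFundamental N d r (Amat d r G y τ) τ Ξ)
    (μ : ℂ) (hsimple : IsSimpleEigenvalue (Ξ T) μ)
    (z : ZMod N → ℝ → Fin d → ℂ) (hzC1 : ∀ n, ContDiff ℝ 1 (z n)) (hzne : z ≠ 0)
    (hz : SatFloquet N d r (Amat d r G y τ) τ T μ z) :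
    ∃! l : ℕ, (1 ≤ l ∧ l ≤ N) ∧ ∃ ζ : ℝ → Fin d → ℂ,
      ζ ≠ 0 ∧ (∀ t, ζ (t + T) = ζ t) ∧ ContDiff ℝ 1 ζ ∧
      SatMSE d r (Amat d r G y τ) τ (Complex.log μ / (T : ℂ))
        (2 * Real.pi * (l : ℝ) / (N : ℝ)) ζ ∧
      ∀ (n : ZMod N) (t : ℝ),
        z n t = pwave d (Complex.log μ / (T : ℂ))
          (2 * Real.pi * (l : ℝ) / (N : ℝ)) τ ζ n.val t := by
  classical
  haveI : Fact (1 < N) := ⟨hN⟩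
  set A := Amat d r G y τ with hA
  set lam : ℂ := Complex.log μ / (T : ℂ) with hlam
  obtain ⟨C, hC0, hCb⟩ := exists_entSum_bound (τ := τ) hG hyC1.continuous hyper hT
  have hlip : ∀ t, LipschitzWith C.toNNReal (KV N d r A τ t) := fun t =>
    KV_lipschitz hC0 hCb t
  set zc : ℝ → (ZMod N × Fin d → ℂ) := fun t p => z p.1 t p.2 with hzc
  have hSolzc : ∀ t, HasDerivAt zc (KV N d r A τ t (zc t)) t := by
    intro t
    rw [hasDerivAt_pi]
    intro p
    exact (hasDerivAt_pi.mp (hz.1 p.1 t)) p.2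
  have hrep : ∀ (f : ℝ → (ZMod N × Fin d → ℂ)),
      (∀ t, HasDerivAt f (KV N d r A τ t (f t)) t) → ∀ t, f t = (Ξ t).mulVec (f 0) := by
    intro f hf t
    have h0 : f 0 = (fun s => (Ξ s).mulVec (f 0)) 0 := by
      show f 0 = (Ξ 0).mulVec (f 0)
      rw [hΞ.1, Matrix.one_mulVec]
    exact congrFun (sol_unique hlip hf (fun t => hΞ.2 (f 0) t) h0) t
  set Sz : ℝ → (ZMod N × Fin d → ℂ) := fun t p => z (p.1 + 1) (t + τ) p.2 with hSz
  have hAarg : ∀ (n : ZMod N) (t : ℝ),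
      A (t + τ - (((n + 1).val : ℕ) : ℝ) * τ) = A (t - ((n.val : ℕ) : ℝ) * τ) := by
    intro n t
    have hNlt : 1 < N := hN
    have hval : (n + 1).val = (n.val + 1) % N := by
      rw [ZMod.val_add, ZMod.val_one]
    have hvlt : n.val < N := ZMod.val_lt n
    rcases lt_or_eq_of_le (Nat.succ_le_of_lt hvlt) with hlt | heq
    · rw [hval, Nat.mod_eq_of_lt hlt]
      congr 1
      push_cast
      ring
    · have h0 : (n + 1).val = 0 := by rw [hval, show n.val + 1 = N from heq, Nat.mod_self]
      rw [h0]
      have hnv : ((n.val : ℝ)) + 1 = (N : ℝ) := by exact_mod_cast congrArg (Nat.cast : ℕ → ℝ) heq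
      have harg : t + τ - ((0 : ℕ) : ℝ) * τ = (t - ((n.val : ℕ) : ℝ) * τ) + (M : ℝ) * T := by
        have h2 : ((n.val : ℝ)) * τ + τ = (M : ℝ) * T := by
          rw [← hcons, ← hnv]; ring
        push_cast
        linarith
      rw [harg, hA, Amat_periodic_nat hyper]
  have hKVSz : ∀ t, KV N d r A τ t (Sz t) = fun p : ZMod N × Fin d =>
      (∑ j : Fin (2 * r + 1), (A (t + τ - (((p.1 + 1).val : ℕ) : ℝ) * τ) j).mulVec
        (z (p.1 + 1 + nodeOff N r j) (t + τ))) p.2 := by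
    intro t
    funext q
    show (∑ j : Fin (2 * r + 1), (A (t - ((q.1.val : ℕ) : ℝ) * τ) j).mulVec
        (fun k => z (q.1 + nodeOff N r j + 1) (t + τ) k)) q.2 = _
    rw [hAarg q.1 t]
    exact congrFun (Finset.sum_congr rfl fun j _ => by rw [add_right_comm]) q.2
  have hSolSz : ∀ t, HasDerivAt Sz (KV N d r A τ t (Sz t)) t := by
    intro t
    rw [hasDerivAt_pi]
    intro p
    have h := (hasDerivAt_pi.mp (hz.1 (p.1 + 1) (t + τ))) p.2
    have h2 := h.comp_add_const t τ
    rw [congrFun (hKVSz t) p]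
    exact h2
  have hzcflo : ∀ t, zc (t + T) = μ • zc t := by
    intro t; funext p; exact congrFun (hz.2 p.1 t) p.2
  have hSzflo : ∀ t, Sz (t + T) = μ • Sz t := by
    intro t; funext p
    show z (p.1 + 1) (t + T + τ) p.2 = _
    rw [show t + T + τ = (t + τ) + T by ring]
    exact congrFun (hz.2 (p.1 + 1) (t + τ)) p.2
  have hzc0 : zc 0 ≠ 0 := by
    intro h
    apply hzne
    funext n t k
    have h1 := congrFun (hrep zc hSolzc t) (n, k)
    rw [h] at h1
    rw [Matrix.mulVec_zero] at h1
    exact h1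
  have heig1 : (Ξ T).mulVec (zc 0) = μ • zc 0 := by
    have h1 := hrep zc hSolzc T
    have h2 := hzcflo 0
    rw [zero_add] at h2
    rw [h2] at h1
    exact h1.symm
  have heig2 : (Ξ T).mulVec (Sz 0) = μ • Sz 0 := by
    have h1 := hrep Sz hSolSz T
    have h2 := hSzflo 0
    rw [zero_add] at h2
    rw [h2] at h1
    exact h1.symm
  obtain ⟨κ, hκ0⟩ := eigenvec_proportional (Ξ T) μ hsimple (zc 0) (Sz 0) heig1 heig2 hzc0
  have hSolκ : ∀ t, HasDerivAt (fun s => κ • zc s) (KV N d r A τ t (κ • zc t)) t := by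
    intro t; rw [KV_smul]; exact (hSolzc t).const_smul κ
  have hSzeq : Sz = fun s => κ • zc s :=
    sol_unique hlip hSolSz hSolκ (t₀ := 0) hκ0
  have hstep : ∀ (n : ZMod N) (t : ℝ), z (n + 1) (t + τ) = κ • z n t := by
    intro n t; funext k
    exact congrFun (congrFun hSzeq t) (n, k)
  have hκne : κ ≠ 0 := by
    intro h0
    apply hzne
    funext n t k
    have h3 := hstep (n - 1) (t - τ)
    rw [h0, zero_smul, sub_add_cancel, sub_add_cancel] at h3
    rw [h3]
    rfl
  have hstep' : ∀ (n : ZMod N) (t : ℝ), z n t = κ⁻¹ • z (n + 1) (t + τ) := by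
    intro n t
    rw [hstep n t, smul_smul, inv_mul_cancel₀ hκne, one_smul]
  have hpow : ∀ (m : ℤ) (t : ℝ), z ((m : ZMod N)) t = κ ^ m • z 0 (t - (m : ℝ) * τ) := by
    intro m
    induction m using Int.induction_on with
    | zero => intro t; simp
    | succ i ih =>
      intro t
      have h2 := hstep ((i : ℤ) : ZMod N) (t - τ)
      rw [sub_add_cancel] at h2
      have hc : (((i : ℤ) + 1 : ℤ) : ZMod N) = ((i : ℤ) : ZMod N) + 1 := by push_cast; ring
      rw [hc, h2, ih (t - τ), smul_smul]
      rw [show κ * κ ^ (i : ℤ) = κ ^ ((i : ℤ) + 1) by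
        rw [zpow_add_one₀ hκne]; ring]
      congr 1
      push_cast
      ring
    | pred i ih =>
      intro t
      have h2 := hstep' ((-(i : ℤ) - 1 : ℤ) : ZMod N) t
      have hc : ((-(i : ℤ) - 1 : ℤ) : ZMod N) + 1 = ((-(i : ℤ) : ℤ) : ZMod N) := by
        push_cast; ring
      rw [hc] at h2
      rw [h2, ih (t + τ), smul_smul]
      rw [show κ⁻¹ * κ ^ (-(i : ℤ)) = κ ^ (-(i : ℤ) - 1) by
        rw [zpow_sub_one₀ hκne]; ring]
      congr 1
      push_cast
      ring
  have hzMT : ∀ (n : ZMod N) (m : ℕ) (t : ℝ), z n (t + (m : ℝ) * T) = μ ^ m • z n t := by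
    intro n m
    induction m with
    | zero => intro t; simp
    | succ k ih =>
      intro t
      have h1 : t + ((k : ℝ) + 1) * T = (t + (k : ℝ) * T) + T := by ring
      push_cast
      rw [h1, hz.2 n (t + (k : ℝ) * T), ih t, smul_smul, ← pow_succ']
  obtain ⟨p₀, hp₀⟩ : ∃ p, zc 0 p ≠ 0 := by
    by_contra hcon
    push_neg at hcon
    exact hzc0 (funext hcon)
  obtain ⟨s₀, k₀, hs₀⟩ : ∃ s₀ k₀, z 0 s₀ k₀ ≠ 0 := by
    refine ⟨0 - ((p₀.1.val : ℕ) : ℝ) * τ, p₀.2, fun hcon => ?_⟩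
    have h1 := hpow (p₀.1.val : ℤ) 0
    have h2 : (((p₀.1.val : ℤ)) : ZMod N) = p₀.1 := by
      push_cast
      rw [ZMod.natCast_val, ZMod.cast_id]
    rw [h2] at h1
    apply hp₀
    show z p₀.1 0 p₀.2 = 0
    rw [h1]
    show κ ^ ((p₀.1.val : ℕ) : ℤ) * z 0 (0 - (((p₀.1.val : ℕ) : ℤ) : ℝ) * τ) p₀.2 = 0
    rw [show ((((p₀.1.val : ℕ) : ℤ)) : ℝ) = ((p₀.1.val : ℕ) : ℝ) by push_cast; ring]
    rw [hcon, mul_zero]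
  have hκN : κ ^ (N : ℤ) = μ ^ M := by
    have h1 := hpow (N : ℤ) (s₀ + (N : ℝ) * τ)
    have h2 : (((N : ℤ)) : ZMod N) = 0 := by
      push_cast
      exact ZMod.natCast_self N
    rw [h2] at h1
    have h3 : s₀ + (N : ℝ) * τ - (((N : ℤ)) : ℝ) * τ = s₀ := by push_cast; ring
    rw [h3] at h1
    have h4 := hzMT 0 M s₀
    have h5 : s₀ + (N : ℝ) * τ = s₀ + (M : ℝ) * T := by rw [hcons]
    rw [h5] at h1
    rw [h4] at h1
    have h6 := congrFun h1 k₀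
    simp only [Pi.smul_apply, smul_eq_mul] at h6
    exact mul_right_cancel₀ hs₀ h6.symm
  have hμne : μ ≠ 0 := by
    have h1 : μ ^ M ≠ 0 := by
      rw [← hκN]
      exact zpow_ne_zero _ hκne
    exact fun h => h1 (by rw [h]; exact zero_pow hM.ne')
  have heT : Complex.exp (lam * (T : ℂ)) = μ := by
    rw [hlam, div_mul_cancel₀ _ (Complex.ofReal_ne_zero.2 hT.ne')]
    exact Complex.exp_log hμne
  obtain ⟨l, hl1, hlN, hκexp⟩ : ∃ l : ℕ, 1 ≤ l ∧ l ≤ N ∧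
      κ = Complex.exp (lam * τ + Complex.I * ((2 * Real.pi * (l : ℝ) / (N : ℝ) : ℝ) : ℂ)) := by
    set u : ℂ := κ * Complex.exp (-(lam * τ)) with hu
    have hκN' : κ ^ N = μ ^ M := by rw [← zpow_natCast κ N]; exact hκN
    have huN : u ^ N = 1 := by
      rw [hu, mul_pow, ← Complex.exp_nat_mul, hκN']
      have hNτ : ((N : ℝ) * τ : ℂ) = ((M : ℝ) * T : ℂ) := by exact_mod_cast congrArg Complex.ofReal hcons
      push_cast at hNτ
      have harg : (N : ℂ) * (-(lam * τ)) = (M : ℕ) * (-(lam * T)) := by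
        push_cast
        calc (N : ℂ) * (-(lam * τ)) = -lam * ((N : ℂ) * τ) := by ring
          _ = -lam * ((M : ℂ) * T) := by rw [hNτ]
          _ = (M : ℂ) * (-(lam * T)) := by ring
      rw [harg, Complex.exp_nat_mul, Complex.exp_neg, heT, ← mul_pow, mul_inv_cancel₀ hμne,
        one_pow]
    obtain ⟨i, hiN, hieq⟩ :=
      (Complex.isPrimitiveRoot_exp N (NeZero.ne N)).eq_pow_of_pow_eq_one huN
    refine ⟨if i = 0 then N else i, ?_, ?_, ?_⟩
    · by_cases h : i = 0 <;> simp [h] <;> omega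
    · by_cases h : i = 0 <;> simp [h]; omega
    · have hul : u = Complex.exp (Complex.I *
          ((2 * Real.pi * ((if i = 0 then N else i : ℕ) : ℝ) / (N : ℝ) : ℝ) : ℂ)) := by
        rw [← hieq, ← Complex.exp_nat_mul]
        by_cases h : i = 0
        · rw [if_pos h, h]
          rw [show ((0 : ℕ) : ℂ) * (2 * (Real.pi : ℂ) * Complex.I / (N : ℂ)) = 0 by ring,
            Complex.exp_zero]
          have hNr : (2 * Real.pi * ((N : ℕ) : ℝ) / (N : ℝ) : ℝ) = 2 * Real.pi := by
            field_simp
          rw [hNr]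
          rw [show Complex.I * ((2 * Real.pi : ℝ) : ℂ) = 2 * (Real.pi : ℂ) * Complex.I by
            push_cast; ring]
          exact Complex.exp_two_pi_mul_I.symm
        · rw [if_neg h]
          congr 1
          push_cast
          have hN0 : (N : ℂ) ≠ 0 := by exact_mod_cast Nat.cast_ne_zero.2 (NeZero.ne N)
          field_simp
      have hκu : κ = u * Complex.exp (lam * τ) := by
        rw [hu, mul_assoc, ← Complex.exp_add]
        rw [show -(lam * τ) + lam * τ = 0 by ring, Complex.exp_zero, mul_one]
      rw [hκu, hul, ← Complex.exp_add, add_comm]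
  set φ : ℝ := 2 * Real.pi * (l : ℝ) / (N : ℝ) with hφ
  set ζ : ℝ → Fin d → ℂ := fun t => Complex.exp (-(lam * t)) • z 0 t with hζ
  have hζne : ζ ≠ 0 := by
    intro h
    have h1 := congrFun (congrFun h s₀) k₀
    rw [hζ] at h1
    simp only [Pi.smul_apply, smul_eq_mul, Pi.zero_apply] at h1
    exact hs₀ ((mul_eq_zero.mp h1).resolve_left (Complex.exp_ne_zero _))
  have hζper : ∀ t, ζ (t + T) = ζ t := by
    intro t
    rw [hζ]
    show Complex.exp (-(lam * ((t : ℝ) + T : ℝ))) • z 0 (t + T) = _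
    rw [hz.2 0 t, smul_smul]
    congr 1
    push_cast
    rw [show -(lam * ((t : ℂ) + (T : ℂ))) = -(lam * t) + -(lam * T) by ring, Complex.exp_add,
      mul_assoc]
    have h2 : Complex.exp (-(lam * (T : ℂ))) * μ = 1 := by
      rw [Complex.exp_neg, heT, inv_mul_cancel₀ hμne]
    rw [h2, mul_one]
  have hζC1 : ContDiff ℝ 1 ζ := by
    have h1 : ContDiff ℝ 1 (fun t : ℝ => -(lam * (t : ℂ))) :=
      (contDiff_const.mul Complex.ofRealCLM.contDiff).neg
    have h2 : ContDiff ℝ 1 (fun t : ℝ => Complex.exp (-(lam * (t : ℂ)))) :=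
      (Complex.contDiff_exp (𝕜 := ℝ) (n := 1)).comp h1
    rw [hζ, contDiff_pi]
    intro k
    exact h2.mul ((contDiff_pi.mp (hzC1 0)) k)
  have hcast : ∀ j : Fin (2 * r + 1), ((((j : ℕ) : ℤ) - (r : ℤ) : ℤ) : ℝ) = mShift r j := by
    intro j; unfold mShift; push_cast; ring
  have hκm : ∀ m : ℤ, κ ^ m = Complex.exp ((m : ℂ) * (lam * τ + Complex.I * (φ : ℂ))) := by
    intro m
    rw [Complex.exp_int_mul, ← hκexp]
  have hMSE : SatMSE d r A τ lam φ ζ := by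
    intro t
    have h1 : HasDerivAt (fun s : ℝ => (s : ℂ)) 1 t := by
      exact (hasDerivAt_id t).ofReal_comp
    have h2 : HasDerivAt (fun s : ℝ => -(lam * (s : ℂ))) (-lam) t := by
      have h2' := (h1.const_mul lam).neg
      rw [mul_one] at h2'
      exact h2'
    have hexp : HasDerivAt (fun s : ℝ => Complex.exp (-(lam * s)))
        (-lam * Complex.exp (-(lam * t))) t := by
      simpa [mul_comm] using h2.cexp
    have hd := hexp.smul (hz.1 0 t)
    have hgoal : -lam • ζ t + (∑ j : Fin (2 * r + 1),
        Complex.exp (Complex.I * ((mShift r j * φ : ℝ) : ℂ)) •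
          (A t j).mulVec (ζ (t - mShift r j * τ)))
        = Complex.exp (-(lam * t)) • (∑ j : Fin (2 * r + 1),
            (A (t - (((0 : ZMod N).val : ℕ) : ℝ) * τ) j).mulVec (z (0 + nodeOff N r j) t))
          + (-lam * Complex.exp (-(lam * t))) • z 0 t := by
      have e1 : (-lam : ℂ) • ζ t = (-lam * Complex.exp (-(lam * t))) • z 0 t := by
        rw [hζ]
        show -lam • (Complex.exp (-(lam * t)) • z 0 t) = _
        rw [smul_smul]
      have e2 : ∀ j : Fin (2 * r + 1),
          Complex.exp (Complex.I * ((mShift r j * φ : ℝ) : ℂ)) •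
            (A t j).mulVec (ζ (t - mShift r j * τ))
          = Complex.exp (-(lam * t)) •
            ((A (t - (((0 : ZMod N).val : ℕ) : ℝ) * τ) j).mulVec (z (0 + nodeOff N r j) t)) := by
        intro j
        have hz' : z (0 + nodeOff N r j) t
            = κ ^ (((j : ℕ) : ℤ) - (r : ℤ)) • z 0 (t - mShift r j * τ) := by
          rw [zero_add]
          have h4 := hpow ((((j : ℕ) : ℤ) - (r : ℤ))) t
          rw [hcast j] at h4
          exact h4
        have hζv : ζ (t - mShift r j * τ)
            = Complex.exp (-(lam * ((t - mShift r j * τ : ℝ) : ℂ))) •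
              z 0 (t - mShift r j * τ) := rfl
        simp only [ZMod.val_zero, Nat.cast_zero, zero_mul, sub_zero]
        rw [hz', hζv]
        simp only [Matrix.mulVec_smul, smul_smul]
        congr 1
        rw [hκm, ← Complex.exp_add, ← Complex.exp_add]
        congr 1
        simp only [mShift]
        push_cast
        ring
      rw [add_comm, Finset.smul_sum, e1]
      congr 1
      exact Finset.sum_congr rfl fun j _ => e2 j
    rw [hgoal]
    exact hd
  have hrepr : ∀ (n : ZMod N) (t : ℝ), z n t = pwave d lam φ τ ζ (n.val) t := by
    intro n t
    have h1 := hpow (n.val : ℤ) t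
    have h2 : (((n.val : ℕ) : ℤ) : ZMod N) = n := by
      push_cast
      rw [ZMod.natCast_val, ZMod.cast_id]
    rw [h2] at h1
    have h3 : (((n.val : ℕ) : ℤ) : ℝ) = ((n.val : ℕ) : ℝ) := by push_cast; ring
    rw [h3] at h1
    funext k
    show z n t k = Complex.exp (lam * t + Complex.I * ((((n.val : ℕ) : ℝ) * φ : ℝ) : ℂ)) *
      ζ (t - ((n.val : ℕ) : ℝ) * τ) k
    rw [h1]
    show κ ^ ((n.val : ℕ) : ℤ) * z 0 (t - ((n.val : ℕ) : ℝ) * τ) k = _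
    have hζk : ζ (t - ((n.val : ℕ) : ℝ) * τ) k
        = Complex.exp (-(lam * ((t - ((n.val : ℕ) : ℝ) * τ : ℝ) : ℂ))) *
          z 0 (t - ((n.val : ℕ) : ℝ) * τ) k := rfl
    rw [hζk, hκm, ← mul_assoc, ← Complex.exp_add]
    congr 2
    push_cast
    ring
  refine ⟨l, ⟨⟨hl1, hlN⟩, ζ, hζne, hζper, hζC1, hMSE, hrepr⟩, ?_⟩
  rintro l' ⟨⟨hl'1, hl'N⟩, ζ', hζ'ne, hζ'per, hζ'C1, hMSE', hrepr'⟩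
  set φ' : ℝ := 2 * Real.pi * (l' : ℝ) / (N : ℝ) with hφ'
  -- ζ' agrees with ζ
  have hζ'eq : ∀ (s : ℝ) (k : Fin d), ζ' s k = ζ s k := by
    intro s k
    have h1 := congrFun (hrepr' 0 s) k
    have h2 := congrFun (hrepr 0 s) k
    rw [show (0 : ZMod N).val = 0 from ZMod.val_zero] at h1 h2
    unfold pwave at h1 h2
    simp only [Nat.cast_zero, zero_mul, sub_zero, Complex.ofReal_zero, mul_zero, add_zero] at h1 h2
    rw [h1] at h2
    exact mul_left_cancel₀ (Complex.exp_ne_zero _) h2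
  -- compare at node 1
  have hval1 : (1 : ZMod N).val = 1 := ZMod.val_one N
  have h1 := congrFun (hrepr' 1 (s₀ + τ)) k₀
  have h2 := congrFun (hrepr 1 (s₀ + τ)) k₀
  rw [hval1] at h1 h2
  unfold pwave at h1 h2
  simp only [Nat.cast_one, one_mul] at h1 h2
  rw [show s₀ + τ - τ = s₀ by ring] at h1 h2
  rw [hζ'eq s₀ k₀] at h1
  have hζs₀ : ζ s₀ k₀ ≠ 0 := by
    show Complex.exp (-(lam * s₀)) * z 0 s₀ k₀ ≠ 0
    exact mul_ne_zero (Complex.exp_ne_zero _) hs₀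
  have hexpeq : Complex.exp (lam * ((s₀ + τ : ℝ) : ℂ) + Complex.I * ((φ' : ℝ) : ℂ))
      = Complex.exp (lam * ((s₀ + τ : ℝ) : ℂ) + Complex.I * ((φ : ℝ) : ℂ)) := by
    have h3 : Complex.exp (lam * ((s₀ + τ : ℝ) : ℂ) + Complex.I * ((φ' : ℝ) : ℂ)) * ζ s₀ k₀
        = Complex.exp (lam * ((s₀ + τ : ℝ) : ℂ) + Complex.I * ((φ : ℝ) : ℂ)) * ζ s₀ k₀ := by
      rw [← h1, ← h2]
    exact mul_right_cancel₀ hζs₀ h3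
  obtain ⟨n, hn⟩ := Complex.exp_eq_exp_iff_exists_int.mp hexpeq
  have h4 : Complex.I * (((φ' : ℝ) : ℂ) - ((φ : ℝ) : ℂ) - (n : ℂ) * (2 * Real.pi)) = 0 := by
    rw [show Complex.I * (((φ' : ℝ) : ℂ) - ((φ : ℝ) : ℂ) - (n : ℂ) * (2 * Real.pi))
      = (lam * ((s₀ + τ : ℝ) : ℂ) + Complex.I * ((φ' : ℝ) : ℂ))
        - ((lam * ((s₀ + τ : ℝ) : ℂ) + Complex.I * ((φ : ℝ) : ℂ)) + (n : ℂ) * (2 * Real.pi * Complex.I))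
      by ring, hn, sub_self]
  have h4' : (((φ' : ℝ) : ℂ) - ((φ : ℝ) : ℂ) - (n : ℂ) * (2 * Real.pi)) = 0 :=
    (mul_eq_zero.mp h4).resolve_left Complex.I_ne_zero
  have h5 : ((φ' - φ - (n : ℝ) * (2 * Real.pi) : ℝ) : ℂ) = 0 := by
    rw [← h4']
    push_cast
    ring
  have h6 : φ' - φ - (n : ℝ) * (2 * Real.pi) = 0 := by exact_mod_cast h5
  have hNne : (N : ℝ) ≠ 0 := Nat.cast_ne_zero.2 (NeZero.ne N)
  have h7 : (l' : ℝ) = (l : ℝ) + (n : ℝ) * (N : ℝ) := by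
    have hπ : (2 * Real.pi) ≠ 0 := by positivity
    rw [hφ', hφ] at h6
    have hexp2 : 2 * Real.pi * ((l' : ℝ) - l - n * N)
        = (2 * Real.pi * (l' : ℝ) / N - 2 * Real.pi * (l : ℝ) / N - n * (2 * Real.pi)) * N := by
      field_simp
    have h6' : 2 * Real.pi * ((l' : ℝ) - l - n * N) = 0 := by
      rw [hexp2, h6, zero_mul]
    have h6'' : (l' : ℝ) - l - n * N = 0 :=
      (mul_eq_zero.mp h6').resolve_left hπ
    linarith
  have h8 : (l' : ℤ) = (l : ℤ) + n * (N : ℤ) := by exact_mod_cast h7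
  have hNposZ : (0 : ℤ) < (N : ℤ) := by exact_mod_cast Nat.pos_of_ne_zero (NeZero.ne N)
  have hn0 : n = 0 := by
    rcases lt_trichotomy n 0 with h | h | h
    · exfalso
      have h9 : n * (N : ℤ) ≤ -1 * (N : ℤ) :=
        mul_le_mul_of_nonneg_right (by omega) hNposZ.le
      have h10 : (l' : ℤ) ≥ 1 := by exact_mod_cast hl'1
      have h11 : (l : ℤ) ≤ N := by exact_mod_cast hlN
      omega
    · exact h
    · exfalso
      have h9 : 1 * (N : ℤ) ≤ n * (N : ℤ) :=
        mul_le_mul_of_nonneg_right (by omega) hNposZ.le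
      have h10 : (l' : ℤ) ≤ N := by exact_mod_cast hl'N
      have h11 : (l : ℤ) ≥ 1 := by exact_mod_cast hl1
      omega
  rw [hn0] at h8
  simp at h8
  exact_mod_cast h8

end
end

section
/- Assume Nτ = MT for a positive integer M, fix λ ∈ ℂ and φ = 2πl/N for some l ∈ {1,…,N}, and let the matrices A_m be continuous. The set S of T-periodic C¹ solutions ζ : ℝ → ℂ^d of the master stability equation at (λ, φ) is a ℂ-linear subspace, and the linear map S → (ℂ^d)^N sending ζ to the vector (ζ(−τ), ζ(−2τ), …, ζ(−Nτ)) is injective; consequently, the solution space S has complex dimension at most N·d. -/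
noncomputable section

-- auxiliary vector field
def mseV (N d r : ℕ) [NeZero N] (A : ℝ → Fin (2 * r + 1) → Matrix (Fin d) (Fin d) ℂ)
    (τ : ℝ) (lam : ℂ) (φ : ℝ) (t : ℝ) (x : ZMod N × Fin d → ℂ) : ZMod N × Fin d → ℂ :=
  fun p => -lam * x p + ∑ j : Fin (2 * r + 1),
    Complex.exp (Complex.I * ((mShift r j * φ : ℝ) : ℂ)) *
      ∑ q : Fin d, A (t - (((p.1.val : ℕ) : ℝ) + 1) * τ) j p.2 q * x (p.1 + nodeOff N r j, q)

lemma mse_sub {d r : ℕ} {A : ℝ → Fin (2 * r + 1) → Matrix (Fin d) (Fin d) ℂ} {τ : ℝ}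
    {lam : ℂ} {φ : ℝ} {ζ₁ ζ₂ : ℝ → Fin d → ℂ}
    (h1 : SatMSE d r A τ lam φ ζ₁) (h2 : SatMSE d r A τ lam φ ζ₂) :
    SatMSE d r A τ lam φ (ζ₁ - ζ₂) := by
  intro t
  have h := (h1 t).sub (h2 t)
  refine h.congr_deriv ?_
  simp only [Pi.sub_apply, Matrix.mulVec_sub, smul_sub, Finset.sum_sub_distrib]
  abel

lemma mse_zero_of_initial (N d r Mn : ℕ) [NeZero N] (τ T : ℝ) (hT : 0 < T)
    (hcons : (N : ℝ) * τ = (Mn : ℝ) * T)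
    (A : ℝ → Fin (2 * r + 1) → Matrix (Fin d) (Fin d) ℂ)
    (hAcont : ∀ j, Continuous fun t => A t j)
    (hAper : ∀ t j, A (t + T) j = A t j)
    (lam : ℂ) (φ : ℝ) (w : ℝ → Fin d → ℂ)
    (hw : SatMSE d r A τ lam φ w)
    (hper : ∀ t, w (t + T) = w t)
    (h0 : ∀ i : Fin N, w (-(((i : ℕ) : ℝ) + 1) * τ) = 0) :
    ∀ t, w t = 0 := by
  have hP : Function.Periodic w T := hper
  have hperZ : ∀ (k : ℤ) (s : ℝ), w (s + (k : ℝ) * T) = w s := fun k s => (hP.int_mul k) s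
  -- index wrap
  have wrap : ∀ (n : ZMod N) (j : Fin (2 * r + 1)) (s : ℝ),
      w (s - (((n.val : ℕ) : ℝ) + 1) * τ - mShift r j * τ) =
        w (s - ((((n + nodeOff N r j).val : ℕ) : ℝ) + 1) * τ) := by
    intro n j s
    set a : ℤ := (n.val : ℤ) + ((j : ℕ) : ℤ) - (r : ℤ) with ha
    have hcast : ((a : ZMod N)) = n + nodeOff N r j := by
      have h1 : ((n.val : ℕ) : ZMod N) = n := ZMod.natCast_rightInverse n
      rw [ha, nodeOff]
      push_cast
      rw [h1]; ring
    set b : ℕ := (n + nodeOff N r j).val with hbdef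
    have hb : ((b : ℤ) : ZMod N) = (a : ZMod N) := by
      have : ((b : ℕ) : ZMod N) = n + nodeOff N r j := ZMod.natCast_rightInverse _
      rw [Int.cast_natCast, this, hcast]
    have hdvd : (N : ℤ) ∣ a - (b : ℤ) := by
      rw [← ZMod.intCast_zmod_eq_zero_iff_dvd, Int.cast_sub, hb, sub_self]
    obtain ⟨k, hk⟩ := hdvd
    have hk' : (n.val : ℝ) + (((j : ℕ) : ℝ) - (r : ℝ)) - (b : ℝ) = (N : ℝ) * (k : ℝ) := by
      have := congrArg (fun z : ℤ => (z : ℝ)) hk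
      push_cast [ha] at this ⊢
      linarith [this]
    have hreal : s - (((n.val : ℕ) : ℝ) + 1) * τ - mShift r j * τ =
        (s - (((b : ℕ) : ℝ) + 1) * τ) + ((-(k * (Mn : ℤ)) : ℤ) : ℝ) * T := by
      unfold mShift
      push_cast
      linear_combination (-τ) * hk' + (-(k : ℝ)) * hcons
    rw [hreal, hperZ]
  -- the bundled function
  set z : ℝ → (ZMod N × Fin d → ℂ) :=
    fun t p => w (t - (((p.1.val : ℕ) : ℝ) + 1) * τ) p.2 with hzdef
  have hz0 : z 0 = 0 := by
    funext p
    have h := congrFun (h0 ⟨p.1.val, ZMod.val_lt p.1⟩) p.2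
    have harg : (0 : ℝ) - (((p.1.val : ℕ) : ℝ) + 1) * τ = -(((p.1.val : ℕ) : ℝ) + 1) * τ := by ring
    simp only [hzdef, harg]
    exact h
  -- derivative of z
  have hderiv : ∀ t, HasDerivAt z (mseV N d r A τ lam φ t (z t)) t := by
    intro t
    apply hasDerivAt_pi.2
    intro p
    set c : ℝ := (((p.1.val : ℕ) : ℝ) + 1) * τ with hcdef
    have h1 := hw (t - c)
    have h2 : HasDerivAt (fun s => w (s - c))
        ((1 : ℝ) • (-lam • w (t - c) + ∑ j : Fin (2 * r + 1),
          Complex.exp (Complex.I * ((mShift r j * φ : ℝ) : ℂ)) •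
            (A (t - c) j).mulVec (w (t - c - mShift r j * τ)))) t :=
      HasDerivAt.scomp t h1 ((hasDerivAt_id t).sub_const c)
    have h3 := (hasDerivAt_pi.1 h2) p.2
    have hval : mseV N d r A τ lam φ t (z t) p =
        ((1 : ℝ) • (-lam • w (t - c) + ∑ j : Fin (2 * r + 1),
          Complex.exp (Complex.I * ((mShift r j * φ : ℝ) : ℂ)) •
            (A (t - c) j).mulVec (w (t - c - mShift r j * τ)))) p.2 := by
      simp only [one_smul, mseV, Pi.add_apply, Pi.smul_apply, Finset.sum_apply,
        Matrix.mulVec, dotProduct, smul_eq_mul, neg_mul, hzdef]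
      refine congrArg₂ (· + ·) rfl ?_
      refine Finset.sum_congr rfl fun j _ => ?_
      refine congrArg (fun S => Complex.exp (Complex.I * ((mShift r j * φ : ℝ) : ℂ)) * S) ?_
      refine Finset.sum_congr rfl fun q _ => ?_
      rw [congrFun (wrap p.1 j t) q]
    exact hval ▸ h3
  -- bound on the coefficients
  set g : ℝ → ℝ := fun t => ∑ j : Fin (2 * r + 1), ∑ i : Fin d, ∑ q : Fin d, ‖A t j i q‖
    with hgdef
  have hgc : Continuous g := by
    apply continuous_finset_sum
    intro j _
    apply continuous_finset_sum
    intro i _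
    apply continuous_finset_sum
    intro q _
    exact ((continuous_apply q).comp ((continuous_apply i).comp (hAcont j))).norm
  have hgper : Function.Periodic g T := fun t => by simp [hgdef, hAper]
  obtain ⟨C, hC⟩ : ∃ C, ∀ t, g t ≤ C := by
    obtain ⟨C, hC⟩ := (isCompact_Icc (a := (0:ℝ)) (b := T)).exists_bound_of_continuousOn
      hgc.continuousOn
    refine ⟨C, fun t => ?_⟩
    obtain ⟨y, hy, hyeq⟩ := hgper.exists_mem_Ico₀ hT t
    rw [hyeq]
    exact (le_abs_self _).trans (by
      simpa [Real.norm_eq_abs] using hC y (Set.Ico_subset_Icc_self hy))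
  have hgnonneg : ∀ t, 0 ≤ g t := by
    intro t
    refine Finset.sum_nonneg fun j _ => Finset.sum_nonneg fun i _ =>
      Finset.sum_nonneg fun q _ => norm_nonneg _
  have hK0 : (0 : ℝ) ≤ ‖lam‖ + C :=
    add_nonneg (norm_nonneg _) ((hgnonneg 0).trans (hC 0))
  set K : NNReal := ⟨‖lam‖ + C, hK0⟩ with hKdef
  -- Lipschitz
  have hlip : ∀ t, LipschitzWith K (mseV N d r A τ lam φ t) := by
    intro t
    apply LipschitzWith.of_dist_le_mul
    intro x y
    have hKc : (K : ℝ) = ‖lam‖ + C := rfl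
    rw [dist_pi_le_iff (by positivity)]
    intro p
    rw [dist_eq_norm]
    have hd : ∀ q : ZMod N × Fin d, ‖x q - y q‖ ≤ dist x y := fun q => by
      rw [← dist_eq_norm]; exact dist_le_pi_dist x y q
    have hsub : mseV N d r A τ lam φ t x p - mseV N d r A τ lam φ t y p =
        -lam * (x p - y p) + ∑ j : Fin (2 * r + 1),
          Complex.exp (Complex.I * ((mShift r j * φ : ℝ) : ℂ)) *
            ∑ q : Fin d, A (t - (((p.1.val : ℕ) : ℝ) + 1) * τ) j p.2 q *
              (x (p.1 + nodeOff N r j, q) - y (p.1 + nodeOff N r j, q)) := by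
      simp only [mseV]
      rw [add_sub_add_comm, ← mul_sub, ← Finset.sum_sub_distrib]
      refine congrArg₂ (· + ·) rfl (Finset.sum_congr rfl fun j _ => ?_)
      rw [← mul_sub, ← Finset.sum_sub_distrib]
      exact congrArg (fun S => Complex.exp (Complex.I * ((mShift r j * φ : ℝ) : ℂ)) * S)
        (Finset.sum_congr rfl fun q _ => (mul_sub _ _ _).symm)
    rw [hsub, hKc]
    calc ‖-lam * (x p - y p) + _‖
        ≤ ‖-lam * (x p - y p)‖ + ‖∑ j : Fin (2 * r + 1),
            Complex.exp (Complex.I * ((mShift r j * φ : ℝ) : ℂ)) *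
              ∑ q : Fin d, A (t - (((p.1.val : ℕ) : ℝ) + 1) * τ) j p.2 q *
                (x (p.1 + nodeOff N r j, q) - y (p.1 + nodeOff N r j, q))‖ :=
          norm_add_le _ _
      _ ≤ ‖lam‖ * dist x y + ∑ j : Fin (2 * r + 1),
            (∑ q : Fin d, ‖A (t - (((p.1.val : ℕ) : ℝ) + 1) * τ) j p.2 q‖) * dist x y := by
          refine add_le_add ?_ ?_
          · rw [norm_mul, norm_neg]
            exact mul_le_mul_of_nonneg_left (hd p) (norm_nonneg _)
          · refine (norm_sum_le _ _).trans (Finset.sum_le_sum fun j _ => ?_)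
            rw [norm_mul]
            have he : ‖Complex.exp (Complex.I * ((mShift r j * φ : ℝ) : ℂ))‖ = 1 := by
              simp [Complex.norm_exp]
            rw [he, one_mul, Finset.sum_mul]
            refine (norm_sum_le _ _).trans (Finset.sum_le_sum fun q _ => ?_)
            rw [norm_mul]
            exact mul_le_mul_of_nonneg_left (hd _) (norm_nonneg _)
      _ ≤ ‖lam‖ * dist x y + C * dist x y := by
          refine add_le_add le_rfl ?_
          rw [← Finset.sum_mul]
          refine mul_le_mul_of_nonneg_right ?_ dist_nonneg
          refine le_trans ?_ (hC (t - (((p.1.val : ℕ) : ℝ) + 1) * τ))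
          refine Finset.sum_le_sum fun j _ => ?_
          exact Finset.single_le_sum (f := fun i => ∑ q : Fin d,
            ‖A (t - (((p.1.val : ℕ) : ℝ) + 1) * τ) j i q‖)
            (fun i _ => Finset.sum_nonneg fun q _ => norm_nonneg _) (Finset.mem_univ p.2)
      _ = (‖lam‖ + C) * dist x y := by ring
  -- zero vector field on zero
  have hV0 : ∀ s, mseV N d r A τ lam φ s (0 : ZMod N × Fin d → ℂ) = 0 := by
    intro s; funext p; simp [mseV]
  have hzc : Continuous z :=
    continuous_iff_continuousAt.2 fun s => (hderiv s).continuousAt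
  -- z vanishes identically
  have hzero : ∀ t, z t = 0 := by
    intro t
    set b : ℝ := |t| + 1 with hbdef
    have hb0 : (0 : ℝ) ∈ Set.Ioo (-b) b := by
      constructor <;> [nlinarith [abs_nonneg t]; nlinarith [abs_nonneg t]]
    have hmem : t ∈ Set.Icc (-b) b := by
      constructor <;> nlinarith [le_abs_self t, neg_abs_le t]
    have := ODE_solution_unique_of_mem_Icc (v := mseV N d r A τ lam φ)
      (s := fun _ => Set.univ) (K := K)
      (fun t _ => (hlip t).lipschitzOnWith) hb0 hzc.continuousOn
      (fun s _ => hderiv s) (fun _ _ => trivial)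
      (continuousOn_const (c := (0 : ZMod N × Fin d → ℂ)))
      (fun s _ => by simpa [hV0 s] using hasDerivAt_const s (0 : ZMod N × Fin d → ℂ))
      (fun _ _ => trivial) hz0
    exact this hmem
  -- conclude
  intro t
  funext k
  have h := congrFun (hzero (t + τ)) ((0 : ZMod N), k)
  have harg : t + τ - (((ZMod.val (0 : ZMod N) : ℕ) : ℝ) + 1) * τ = t := by
    rw [ZMod.val_zero]; push_cast; ring
  rw [show (0 : Fin d → ℂ) k = 0 from rfl]
  rw [← harg]
  exact h

lemma mse_add {d r : ℕ} {A : ℝ → Fin (2 * r + 1) → Matrix (Fin d) (Fin d) ℂ} {τ : ℝ}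
    {lam : ℂ} {φ : ℝ} {ζ₁ ζ₂ : ℝ → Fin d → ℂ}
    (h1 : SatMSE d r A τ lam φ ζ₁) (h2 : SatMSE d r A τ lam φ ζ₂) :
    SatMSE d r A τ lam φ (ζ₁ + ζ₂) := by
  intro t
  have h := (h1 t).add (h2 t)
  refine h.congr_deriv ?_
  simp only [Pi.add_apply, Matrix.mulVec_add, smul_add, Finset.sum_add_distrib]
  abel

lemma mse_smul {d r : ℕ} {A : ℝ → Fin (2 * r + 1) → Matrix (Fin d) (Fin d) ℂ} {τ : ℝ}
    {lam : ℂ} {φ : ℝ} {ζ : ℝ → Fin d → ℂ} (c : ℂ)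
    (h : SatMSE d r A τ lam φ ζ) :
    SatMSE d r A τ lam φ (c • ζ) := by
  intro t
  have hh := (h t).const_smul c
  refine hh.congr_deriv ?_
  simp only [Pi.smul_apply, Matrix.mulVec_smul, smul_add, Finset.smul_sum]
  rw [smul_comm]
  refine congrArg₂ (· + ·) rfl (Finset.sum_congr rfl fun j _ => ?_)
  rw [smul_comm]

lemma mse_zero {d r : ℕ} {A : ℝ → Fin (2 * r + 1) → Matrix (Fin d) (Fin d) ℂ} {τ : ℝ}
    {lam : ℂ} {φ : ℝ} :
    SatMSE d r A τ lam φ (0 : ℝ → Fin d → ℂ) := by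
  intro t
  have h := hasDerivAt_const t (0 : Fin d → ℂ)
  refine h.congr_deriv ?_
  simp


/-- For fixed `λ` and `φ = 2πl/N` (with `Nτ = MT`), the set of
`T`-periodic `C¹` solutions of the master stability equation is a ℂ-linear subspace,
the evaluation map `ζ ↦ (ζ(−τ), …, ζ(−Nτ))` is injective on it, and hence its
dimension is at most `N·d`. -/
theorem mse_solution_space_finite_dimensional
    (N d r M : ℕ) (hN : 2 ≤ N) (hd : 1 ≤ d) (hr : 1 ≤ r) (hM : 0 < M)
    (τ T : ℝ) (hτ : 0 < τ) (hT : 0 < T) (hcons : (N : ℝ) * τ = (M : ℝ) * T)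
    (A : ℝ → Fin (2 * r + 1) → Matrix (Fin d) (Fin d) ℂ)
    (hAcont : ∀ j, Continuous (fun t => A t j))
    (hAper : ∀ (t : ℝ) (j : Fin (2 * r + 1)), A (t + T) j = A t j)
    (lam : ℂ) (l : ℕ) (hl1 : 1 ≤ l) (hlN : l ≤ N)
    (φ : ℝ) (hφ : φ = 2 * Real.pi * (l : ℝ) / (N : ℝ)) :
    ∃ S : Submodule ℂ (ℝ → Fin d → ℂ),
      (S : Set (ℝ → Fin d → ℂ)) =
        {ζ | ContDiff ℝ 1 ζ ∧ (∀ t, ζ (t + T) = ζ t) ∧ SatMSE d r A τ lam φ ζ} ∧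
      (∀ ζ₁ ∈ S, ∀ ζ₂ ∈ S,
        (∀ i : Fin N, ζ₁ (-(((i : ℕ) : ℝ) + 1) * τ) = ζ₂ (-(((i : ℕ) : ℝ) + 1) * τ)) →
          ζ₁ = ζ₂) ∧
      Module.rank ℂ S ≤ ((N * d : ℕ) : Cardinal) := by
  haveI : NeZero N := ⟨by omega⟩
  set Smod : Submodule ℂ (ℝ → Fin d → ℂ) :=
    { carrier := {ζ | ContDiff ℝ 1 ζ ∧ (∀ t, ζ (t + T) = ζ t) ∧ SatMSE d r A τ lam φ ζ},
      add_mem' := fun {ζ₁ ζ₂} h1 h2 =>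
        ⟨h1.1.add h2.1, fun t => by simp only [Pi.add_apply, h1.2.1 t, h2.2.1 t],
          mse_add h1.2.2 h2.2.2⟩,
      zero_mem' := ⟨contDiff_const, fun t => rfl, mse_zero⟩,
      smul_mem' := fun c ζ h =>
        ⟨h.1.const_smul c, fun t => by simp only [Pi.smul_apply, h.2.1 t],
          mse_smul c h.2.2⟩ } with hSdef
  have hinj : ∀ ζ₁ ∈ Smod, ∀ ζ₂ ∈ Smod,
      (∀ i : Fin N, ζ₁ (-(((i : ℕ) : ℝ) + 1) * τ) = ζ₂ (-(((i : ℕ) : ℝ) + 1) * τ)) →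
        ζ₁ = ζ₂ := by
    intro ζ₁ h1 ζ₂ h2 hinit
    have h1' : ContDiff ℝ 1 ζ₁ ∧ (∀ t, ζ₁ (t + T) = ζ₁ t) ∧ SatMSE d r A τ lam φ ζ₁ := h1
    have h2' : ContDiff ℝ 1 ζ₂ ∧ (∀ t, ζ₂ (t + T) = ζ₂ t) ∧ SatMSE d r A τ lam φ ζ₂ := h2
    have hsub : SatMSE d r A τ lam φ (ζ₁ - ζ₂) := mse_sub h1'.2.2 h2'.2.2
    have hper : ∀ t, (ζ₁ - ζ₂) (t + T) = (ζ₁ - ζ₂) t := fun t => by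
      simp only [Pi.sub_apply, h1'.2.1 t, h2'.2.1 t]
    have h0 : ∀ i : Fin N, (ζ₁ - ζ₂) (-(((i : ℕ) : ℝ) + 1) * τ) = 0 := fun i => by
      simp only [Pi.sub_apply]
      rw [hinit i, sub_self]
    have hz := mse_zero_of_initial N d r M τ T hT hcons A hAcont hAper lam φ (ζ₁ - ζ₂)
      hsub hper h0
    have : ζ₁ - ζ₂ = 0 := funext hz
    exact sub_eq_zero.mp this
  refine ⟨Smod, rfl, hinj, ?_⟩
  -- rank bound via the evaluation map
  set ev : Smod →ₗ[ℂ] (Fin N → Fin d → ℂ) :=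
    { toFun := fun ζ => fun i => (ζ : ℝ → Fin d → ℂ) (-(((i : ℕ) : ℝ) + 1) * τ),
      map_add' := fun _ _ => rfl,
      map_smul' := fun _ _ => rfl } with hevdef
  have hevinj : Function.Injective ev := by
    intro a b hab
    apply Subtype.ext
    exact hinj a.1 a.2 b.1 b.2 fun i => congrFun hab i
  have hrank := LinearMap.rank_le_of_injective ev hevinj
  have htarget : Module.rank ℂ (Fin N → Fin d → ℂ) = ((N * d : ℕ) : Cardinal) := by
    rw [← (LinearEquiv.curry ℂ ℂ (Fin N) (Fin d)).rank_eq, rank_fun']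
    simp
  exact hrank.trans_eq htarget


end
end

section
/- Let y : ℝ → ℝ^d be a C¹, T-periodic solution of the profile equation y'(t) = G(y(t+rτ), …, y(t), …, y(t−rτ)) with τ > 0, and suppose N₀τ = M₀T for positive integers M₀ and N₀. Then for every positive integer K, setting N = K·N₀, the functions x_n(t) := y(t−nτ), n = 1,…,N (node indices modulo N), form a solution of the network system of size N; i.e., the same profile y, with the same period T, delay τ and wave number k = τ/T, yields a discrete traveling wave in every network of size K·N₀. -/
noncomputable section

/-- A `T`-periodic solution `y` of the profile equation with
`N₀τ = M₀T` yields, for every `K ≥ 1`, a discrete traveling wave `x_n(t) = y(t−nτ)`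
in the network of size `N = K·N₀`, with the same profile, period, delay and wave
number. -/
theorem profile_embeds_in_all_multiples
    (d r N₀ M₀ : ℕ) (hd : 1 ≤ d) (hr : 1 ≤ r) (hN₀ : 0 < N₀) (hM₀ : 0 < M₀)
    (G : (Fin (2 * r + 1) → Fin d → ℝ) → Fin d → ℝ) (hG : ContDiff ℝ 1 G)
    (τ T : ℝ) (hτ : 0 < τ) (hT : 0 < T) (hcons : (N₀ : ℝ) * τ = (M₀ : ℝ) * T)
    (y : ℝ → Fin d → ℝ) (hyC1 : ContDiff ℝ 1 y) (hyper : ∀ t, y (t + T) = y t)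
    (hyprof : SatProfile d r G y τ) :
    ∀ K : ℕ, 0 < K →
      ∀ (n : ZMod (K * N₀)) (t : ℝ),
        HasDerivAt (fun s => y (s - (n.val : ℝ) * τ))
          (G (fun j => y (t - (((n + nodeOff (K * N₀) r j).val : ℕ) : ℝ) * τ))) t := by
  intro K hK n t
  have hNpos : 0 < K * N₀ := Nat.mul_pos hK hN₀
  haveI : NeZero (K * N₀) := ⟨hNpos.ne'⟩
  have hper : ∀ (z : ℤ) (s : ℝ), y (s + z * T) = y s := by
    intro z s
    have h0 : Function.Periodic y T := hyper
    exact (h0.int_mul z) s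
  have hshift : HasDerivAt (fun s : ℝ => s - (n.val : ℝ) * τ) 1 t := by
    simpa using (hasDerivAt_id t).sub_const ((n.val : ℝ) * τ)
  have hderiv : HasDerivAt (fun s => y (s - (n.val : ℝ) * τ))
      (G (waveArgs d r y τ (t - (n.val : ℝ) * τ))) t := by
    have := (hyprof (t - (n.val : ℝ) * τ)).scomp t hshift
    rw [one_smul] at this
    exact this
  have harg : waveArgs d r y τ (t - (n.val : ℝ) * τ) =
      fun j => y (t - (((n + nodeOff (K * N₀) r j).val : ℕ) : ℝ) * τ) := by
    funext j
    show y (t - (n.val : ℝ) * τ - (((j : ℕ) : ℝ) - (r : ℝ)) * τ) = _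
    set a : ℤ := (n.val : ℤ) + (j : ℕ) - r with ha
    set v : ℕ := (n + nodeOff (K * N₀) r j).val with hv
    have hcast : ((a : ZMod (K * N₀))) = ((v : ZMod (K * N₀))) := by
      have h1 : ((a : ZMod (K * N₀))) = n + nodeOff (K * N₀) r j := by
        rw [ha]
        push_cast
        rw [nodeOff]
        push_cast
        rw [ZMod.natCast_val, ZMod.cast_id]
        ring
      have h2 : ((v : ZMod (K * N₀))) = n + nodeOff (K * N₀) r j := by
        rw [hv]; exact ZMod.natCast_rightInverse _
      rw [h1, h2]
    have hdvd : ((K * N₀ : ℕ) : ℤ) ∣ (a - v) := by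
      have : ((a - v : ℤ) : ZMod (K * N₀)) = 0 := by push_cast [hcast]; ring
      exact (ZMod.intCast_zmod_eq_zero_iff_dvd _ _).mp this
    obtain ⟨m, hm⟩ := hdvd
    have hNτ : ((K * N₀ : ℕ) : ℝ) * τ = (K : ℝ) * ((M₀ : ℝ) * T) := by
      push_cast; rw [mul_assoc, hcons]
    have hargeq : t - (n.val : ℝ) * τ - (((j : ℕ) : ℝ) - (r : ℝ)) * τ =
        (t - (v : ℝ) * τ) + ((-(m * K * M₀) : ℤ) : ℝ) * T := by
      have hav : (a : ℝ) = (v : ℝ) + ((K * N₀ : ℕ) : ℝ) * m := by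
        have : (a : ℝ) - (v : ℝ) = ((K * N₀ : ℕ) : ℝ) * m := by
          exact_mod_cast congrArg (Int.cast : ℤ → ℝ) hm
        linarith
      have haR : (a : ℝ) = (n.val : ℝ) + (j : ℕ) - r := by rw [ha]; push_cast; ring
      have h3 : t - (n.val : ℝ) * τ - (((j : ℕ) : ℝ) - (r : ℝ)) * τ = t - (a : ℝ) * τ := by
        rw [haR]; ring
      rw [h3, hav]
      push_cast
      have h4 : ((K * N₀ : ℕ) : ℝ) * (m : ℝ) * τ = (m : ℝ) * ((K : ℝ) * ((M₀:ℝ) * T)) := by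
        rw [mul_comm (((K * N₀ : ℕ) : ℝ)) (m:ℝ), mul_assoc, hNτ]
      push_cast at h4
      nlinarith [h4]
    rw [hargeq, hper]
  rw [harg] at hderiv
  exact hderiv

end
end

section
/- Let y : ℝ → ℝ^d be a C¹, T-periodic solution of the profile equation with τ > 0 and N₀τ = M₀T for positive integers M₀, N₀, and let A_m(t) = D_{r+m+1}G(y(t+rτ), …, y(t), …, y(t−rτ)) for |m| ≤ r. Suppose (λ, φ, ζ) satisfies the master stability equation with ζ nonzero T-periodic, and suppose e^{iφ} is a (K·N₀)-th root of unity for some positive integer K, i.e., φ = 2πl/(K·N₀) for some integer l. Then, with N = K·N₀, μ = e^{λT} is a Floquet multiplier of the discrete traveling wave x_n(t) = y(t−nτ) in the network of size N, with bundle z_n(t) = ζ(t−nτ)·e^{λt + inφ}, n = 1,…,N. -/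
noncomputable section

/-- If `(λ, φ, ζ)` satisfies the master stability equation for the
profile `y` (with `N₀τ = M₀T`) and `e^{iφ}` is a `(K·N₀)`-th root of unity,
`φ = 2πl/(K·N₀)`, then `μ = e^{λT}` is a Floquet multiplier of the traveling wave in
the network of size `N = K·N₀`, with bundle `z_n(t) = ζ(t−nτ)e^{λt+inφ}`. -/
theorem mse_gives_floquet_in_multiples
    (d r N₀ M₀ K : ℕ) (hd : 1 ≤ d) (hr : 1 ≤ r) (hN₀ : 0 < N₀) (hM₀ : 0 < M₀)
    (hK : 0 < K)
    (G : (Fin (2 * r + 1) → Fin d → ℝ) → Fin d → ℝ) (hG : ContDiff ℝ 1 G)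
    (τ T : ℝ) (hτ : 0 < τ) (hT : 0 < T) (hcons : (N₀ : ℝ) * τ = (M₀ : ℝ) * T)
    (y : ℝ → Fin d → ℝ) (hyC1 : ContDiff ℝ 1 y) (hyper : ∀ t, y (t + T) = y t)
    (hyprof : SatProfile d r G y τ)
    (lam : ℂ) (l : ℤ) (φ : ℝ) (hφ : φ = 2 * Real.pi * (l : ℝ) / ((K * N₀ : ℕ) : ℝ))
    (ζ : ℝ → Fin d → ℂ) (hζne : ζ ≠ 0) (hζper : ∀ t, ζ (t + T) = ζ t)
    (hζC1 : ContDiff ℝ 1 ζ)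
    (hMSE : SatMSE d r (Amat d r G y τ) τ lam φ ζ) :
    (¬ ∀ (n : ZMod (K * N₀)) (t : ℝ), pwave d lam φ τ ζ n.val t = 0) ∧
    SatFloquet (K * N₀) d r (Amat d r G y τ) τ T (Complex.exp (lam * (T : ℂ)))
      (fun n => pwave d lam φ τ ζ n.val) := by
  have hNpos : 0 < K * N₀ := Nat.mul_pos hK hN₀
  haveI : NeZero (K * N₀) := ⟨hNpos.ne'⟩
  have hNR : ((K * N₀ : ℕ) : ℝ) ≠ 0 := Nat.cast_ne_zero.mpr hNpos.ne'
  have hNφ : ((K * N₀ : ℕ) : ℝ) * φ = 2 * Real.pi * (l : ℝ) := by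
    rw [hφ]; field_simp
  have hζint : ∀ (q : ℤ) (t : ℝ), ζ (t + (q : ℝ) * T) = ζ t := by
    intro q t
    have hper : Function.Periodic ζ T := hζper
    exact (hper.int_mul q) t
  have hNτ : (K : ℝ) * ((N₀ : ℝ) * τ) = (K : ℝ) * ((M₀ : ℝ) * T) := by
    rw [hcons]
  constructor
  · intro h
    apply hζne
    funext t k
    have h0 := congrFun (h 0 t) k
    simp only [pwave, ZMod.val_zero, Nat.cast_zero, zero_mul, sub_zero] at h0
    rcases mul_eq_zero.mp h0 with h1 | h1
    · exact absurd h1 (Complex.exp_ne_zero _)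
    · exact h1
  constructor
  · -- derivative condition
    intro n t
    set ν : ℕ := n.val with hν
    -- derivative of the exponential factor
    have hval : HasDerivAt (fun u : ℝ => (u : ℂ)) 1 t := by
      simpa using (hasDerivAt_id t).ofReal_comp
    have hEd : HasDerivAt
        (fun s : ℝ => Complex.exp (lam * (s : ℂ) + Complex.I * (((ν : ℝ) * φ : ℝ) : ℂ)))
        (lam * Complex.exp (lam * (t : ℂ) + Complex.I * (((ν : ℝ) * φ : ℝ) : ℂ))) t := by
      have h1 : HasDerivAt
          (fun u : ℝ => lam * (u : ℂ) + Complex.I * (((ν : ℝ) * φ : ℝ) : ℂ)) lam t := by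
        simpa using (hval.const_mul lam).add_const (Complex.I * (((ν : ℝ) * φ : ℝ) : ℂ))
      simpa [mul_comm] using h1.cexp
    have hshift : HasDerivAt (fun s : ℝ => s - (ν : ℝ) * τ) 1 t :=
      (hasDerivAt_id t).sub_const _
    have hzd : HasDerivAt (fun s : ℝ => ζ (s - (ν : ℝ) * τ))
        (-lam • ζ (t - (ν : ℝ) * τ) + ∑ j : Fin (2 * r + 1),
          Complex.exp (Complex.I * ((mShift r j * φ : ℝ) : ℂ)) •
            (Amat d r G y τ (t - (ν : ℝ) * τ) j).mulVec
              (ζ (t - (ν : ℝ) * τ - mShift r j * τ))) t := by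
      exact (hMSE (t - (ν : ℝ) * τ)).comp_sub_const t ((ν : ℝ) * τ)
    have hder := hEd.smul hzd
    beta_reduce at hder
    -- per-term identification
    have hterm : ∀ j : Fin (2 * r + 1),
        (Amat d r G y τ (t - (ν : ℝ) * τ) j).mulVec
            (pwave d lam φ τ ζ (n + nodeOff (K * N₀) r j).val t)
          = Complex.exp (lam * (t : ℂ) + Complex.I * (((ν : ℝ) * φ : ℝ) : ℂ)) •
              (Complex.exp (Complex.I * ((mShift r j * φ : ℝ) : ℂ)) •
                (Amat d r G y τ (t - (ν : ℝ) * τ) j).mulVec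
                  (ζ (t - (ν : ℝ) * τ - mShift r j * τ))) := by
      intro j
      set ν' : ℕ := (n + nodeOff (K * N₀) r j).val with hν'
      obtain ⟨q, hq⟩ : ∃ q : ℤ,
          (ν' : ℤ) = (ν : ℤ) + ((j : ℕ) : ℤ) - (r : ℤ) + q * (K * N₀ : ℕ) := by
        have e1 : ((ν' : ℕ) : ZMod (K * N₀)) = n + nodeOff (K * N₀) r j :=
          ZMod.natCast_rightInverse _
        have e2 : ((ν : ℕ) : ZMod (K * N₀)) = n := ZMod.natCast_rightInverse _
        have h1 : ((((ν : ℤ) + ((j : ℕ) : ℤ) - (r : ℤ)) : ℤ) : ZMod (K * N₀))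
            = ((ν' : ℤ) : ZMod (K * N₀)) := by
          push_cast
          rw [e1, e2, nodeOff]
          push_cast
          ring
        have h2 := (ZMod.intCast_eq_intCast_iff _ _ _).mp h1
        obtain ⟨q, hq0⟩ := h2.dvd
        exact ⟨q, by linear_combination hq0⟩
      have hqR : ((ν' : ℕ) : ℝ)
          = (ν : ℝ) + ((j : ℕ) : ℝ) - (r : ℝ) + (q : ℝ) * ((K : ℝ) * (N₀ : ℝ)) := by
        have := congrArg (fun z : ℤ => (z : ℝ)) hq
        push_cast at this
        linear_combination this
      have hqC : ((ν' : ℕ) : ℂ)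
          = (ν : ℂ) + ((j : ℕ) : ℂ) - (r : ℂ) + (q : ℂ) * ((K : ℂ) * (N₀ : ℂ)) := by
        have := congrArg (fun z : ℤ => (z : ℂ)) hq
        push_cast at this
        linear_combination this
      -- shift the argument of ζ by a multiple of the period
      have harg : t - ((ν' : ℕ) : ℝ) * τ
          = (t - (ν : ℝ) * τ - mShift r j * τ) + ((-(q * (K * M₀)) : ℤ) : ℝ) * T := by
        rw [hqR]
        simp only [mShift]
        push_cast
        linear_combination (-(q : ℝ)) * hNτ
      have hzarg : ζ (t - ((ν' : ℕ) : ℝ) * τ) = ζ (t - (ν : ℝ) * τ - mShift r j * τ) := by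
        rw [harg]; exact hζint _ _
      -- exponential factor identity
      have hNφC : (K : ℂ) * ((N₀ : ℂ) * (φ : ℂ)) = 2 * (Real.pi : ℂ) * (l : ℂ) := by
        have := congrArg (fun x : ℝ => (x : ℂ)) hNφ
        push_cast at this
        linear_combination this
      have hexp : Complex.exp (lam * (t : ℂ) + Complex.I * ((((ν' : ℕ) : ℝ) * φ : ℝ) : ℂ))
          = Complex.exp (lam * (t : ℂ) + Complex.I * (((ν : ℝ) * φ : ℝ) : ℂ)) *
              Complex.exp (Complex.I * ((mShift r j * φ : ℝ) : ℂ)) := by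
        rw [← Complex.exp_add]
        have h3 : lam * (t : ℂ) + Complex.I * ((((ν' : ℕ) : ℝ) * φ : ℝ) : ℂ)
            = (lam * (t : ℂ) + Complex.I * (((ν : ℝ) * φ : ℝ) : ℂ)
                + Complex.I * ((mShift r j * φ : ℝ) : ℂ))
              + ((q * l : ℤ) : ℂ) * (2 * (Real.pi : ℂ) * Complex.I) := by
          simp only [mShift]
          push_cast
          linear_combination (Complex.I * (φ : ℂ)) * hqC + (Complex.I * (q : ℂ)) * hNφC
        rw [h3, Complex.exp_add, Complex.exp_int_mul_two_pi_mul_I, mul_one]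
      have hpw : pwave d lam φ τ ζ ν' t
          = Complex.exp (lam * (t : ℂ) + Complex.I * ((((ν' : ℕ) : ℝ) * φ : ℝ) : ℂ)) •
              ζ (t - ((ν' : ℕ) : ℝ) * τ) := rfl
      rw [hpw, Matrix.mulVec_smul, hzarg, hexp, smul_smul]
    -- assemble the sum
    have hsum : (∑ j : Fin (2 * r + 1),
          (Amat d r G y τ (t - (ν : ℝ) * τ) j).mulVec
            (pwave d lam φ τ ζ (n + nodeOff (K * N₀) r j).val t))
        = Complex.exp (lam * (t : ℂ) + Complex.I * (((ν : ℝ) * φ : ℝ) : ℂ)) •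
            (-lam • ζ (t - (ν : ℝ) * τ) + ∑ j : Fin (2 * r + 1),
              Complex.exp (Complex.I * ((mShift r j * φ : ℝ) : ℂ)) •
                (Amat d r G y τ (t - (ν : ℝ) * τ) j).mulVec
                  (ζ (t - (ν : ℝ) * τ - mShift r j * τ)))
          + (lam * Complex.exp (lam * (t : ℂ) + Complex.I * (((ν : ℝ) * φ : ℝ) : ℂ))) •
              ζ (t - (ν : ℝ) * τ) := by
      set E : ℂ := Complex.exp (lam * (t : ℂ) + Complex.I * (((ν : ℝ) * φ : ℝ) : ℂ)) with hE
      rw [smul_add, Finset.smul_sum]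
      rw [Finset.sum_congr rfl fun j _ => hterm j]
      have hc : E • (-lam • ζ (t - (ν : ℝ) * τ)) + (lam * E) • ζ (t - (ν : ℝ) * τ) = 0 := by
        rw [smul_smul, ← add_smul]
        have : E * -lam + lam * E = 0 := by ring
        rw [this, zero_smul]
      rw [add_comm (E • (-lam • ζ (t - (ν : ℝ) * τ))), add_assoc, hc, add_zero]
    rw [← hsum] at hder
    exact hder
  · -- Floquet multiplier condition
    intro n t
    funext k
    simp only [pwave, Pi.smul_apply, smul_eq_mul]
    have harg : t + T - ((n.val : ℕ) : ℝ) * τ = (t - ((n.val : ℕ) : ℝ) * τ) + T := by ring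
    rw [harg, hζper]
    have hsplit : lam * ((t + T : ℝ) : ℂ) + Complex.I * ((((n.val : ℕ) : ℝ) * φ : ℝ) : ℂ)
        = lam * (T : ℂ) + (lam * (t : ℂ) + Complex.I * ((((n.val : ℕ) : ℝ) * φ : ℝ) : ℂ)) := by
      push_cast
      ring
    rw [hsplit, Complex.exp_add, mul_assoc]

end
end
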